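/- arXiv:1604.01887 — 4 statements merged into one kernel-verified Lean document; each statement's English description precedes it below -/
import Mathlib

section
/- For the complete graph K_n and any integer k with 3 ≤ k ≤ n, the pendant-tree k-connectivity satisfies τ_k(K_n) = n − k. -/
open SimpleGraph

/-- A pendant `S`-Steiner tree in `G`: a subgraph `T` of `G` that is a tree,
contains `S`, and in which every vertex of `S` has degree 1. -/
def IsPendantSTree {V : Type*} (G : SimpleGraph V) (S : Set V) (T : G.Subgraph) : Prop :=
  S ⊆ T.verts ∧ T.coe.IsTree ∧ ∀ v ∈ S, (T.neighborSet v).ncard = 1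

/-- A family of pairwise internally disjoint pendant `S`-Steiner trees. -/
def IsIntDisjointFamily {V : Type*} (G : SimpleGraph V) (S : Set V)
    (F : Finset G.Subgraph) : Prop :=
  (∀ T ∈ F, IsPendantSTree G S T) ∧
  ∀ T ∈ F, ∀ T' ∈ F, T ≠ T' →
    T.edgeSet ∩ T'.edgeSet = ∅ ∧ T.verts ∩ T'.verts = S

/-- A family of pairwise edge-disjoint pendant `S`-Steiner trees. -/
def IsEdgeDisjointFamily {V : Type*} (G : SimpleGraph V) (S : Set V)
    (F : Finset G.Subgraph) : Prop :=
  (∀ T ∈ F, IsPendantSTree G S T) ∧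
  ∀ T ∈ F, ∀ T' ∈ F, T ≠ T' → T.edgeSet ∩ T'.edgeSet = ∅

/-- `τ(S)`: the maximum number of pairwise internally disjoint pendant `S`-Steiner trees. -/
noncomputable def tauLocal {V : Type*} (G : SimpleGraph V) (S : Set V) : ℕ :=
  sSup {n | ∃ F : Finset G.Subgraph, F.card = n ∧ IsIntDisjointFamily G S F}

/-- Pendant-tree `k`-connectivity `τ_k(G)`. -/
noncomputable def tau {V : Type*} (G : SimpleGraph V) (k : ℕ) : ℕ :=
  sInf {n | ∃ S : Finset V, S.card = k ∧ tauLocal G ↑S = n}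

/-- `μ(S)`: the maximum number of pairwise edge-disjoint pendant `S`-Steiner trees. -/
noncomputable def muLocal {V : Type*} (G : SimpleGraph V) (S : Set V) : ℕ :=
  sSup {n | ∃ F : Finset G.Subgraph, F.card = n ∧ IsEdgeDisjointFamily G S F}

/-- Pendant-tree `k`-edge-connectivity `μ_k(G)`. -/
noncomputable def mu {V : Type*} (G : SimpleGraph V) (k : ℕ) : ℕ :=
  sInf {n | ∃ S : Finset V, S.card = k ∧ muLocal G ↑S = n}

/-- Vertex connectivity (cut version): the least size of a vertex set whose removal
disconnects the graph or leaves at most one vertex. -/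
noncomputable def kappa {V : Type*} [Fintype V] (G : SimpleGraph V) : ℕ :=
  sInf {n | ∃ S : Finset V, S.card = n ∧
    (¬ ((⊤ : G.Subgraph).deleteVerts ↑S).coe.Connected ∨ Fintype.card V - S.card ≤ 1)}

/-- Edge connectivity: the least size of an edge set whose removal disconnects the graph. -/
noncomputable def edgeConn {V : Type*} (G : SimpleGraph V) : ℕ :=
  sInf {n | ∃ F : Finset (Sym2 V), F.card = n ∧ ↑F ⊆ G.edgeSet ∧
    ¬ (G.deleteEdges ↑F).Connected}

/-- Edges of `G` with one endpoint in `S` and the other outside `S`. -/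
def crossEdges {V : Type*} (G : SimpleGraph V) (S : Set V) : Set (Sym2 V) :=
  {e | e ∈ G.edgeSet ∧ ∃ u v, e = s(u, v) ∧ u ∈ S ∧ v ∉ S}

lemma star_acyclic {V : Type*} {G : SimpleGraph V} {c : V}
    (h : ∀ ⦃x y⦄, G.Adj x y → x = c ∨ y = c) : G.IsAcyclic := by
  intro u w hw
  have h3 := hw.three_le_length
  have hnd := hw.support_nodup
  cases w with
  | nil => simp at h3
  | @cons _ a _ h₁ p =>
    cases p with
    | nil => simp at h3
    | @cons _ b _ h₂ q =>
      rcases h h₁ with huc | rfl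
      · subst huc
        have hbu : b = u := by
          rcases h h₂ with rfl | rfl
          · exact absurd h₁ G.irrefl
          · rfl
        subst hbu
        cases q with
        | nil => simp at h3
        | @cons _ d _ h₃ r =>
          have hdu : d ≠ b := h₃.ne'
          have hur : b ∈ r.support := r.end_mem_support
          simp [Walk.support_cons] at hnd
      · have hda : ∀ {d e : V}, G.Adj d e → d ≠ a → e = a := by
          intro d e hde hd
          rcases h hde with rfl | rfl
          · exact absurd rfl hd
          · rfl
        cases q with
        | nil => simp at h3
        | @cons _ d _ h₃ r =>
          have hba : b ≠ a := h₂.ne'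
          have hd : d = a := hda h₃ hba
          subst hd
          simp [Walk.support_cons] at hnd

def starSub {V : Type*} (S : Set V) (c : V) : (⊤ : SimpleGraph V).Subgraph where
  verts := insert c S
  Adj x y := x ≠ y ∧ ((x = c ∧ y ∈ S) ∨ (y = c ∧ x ∈ S))
  adj_sub h := h.1
  edge_vert := by rintro x y ⟨hne, ⟨rfl, hy⟩ | ⟨rfl, hx⟩⟩ <;> simp [*]
  symm := ⟨by rintro x y ⟨hne, hor⟩; exact ⟨hne.symm, hor.symm⟩⟩

lemma starSub_isTree {V : Type*} {S : Set V} {c : V} (hc : c ∉ S) :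
    (starSub S c).coe.IsTree := by
  have hnt : Nonempty (starSub S c).verts := ⟨⟨c, Set.mem_insert _ _⟩⟩
  constructor
  · apply Connected.mk
    have key : ∀ x : (starSub S c).verts,
        (starSub S c).coe.Reachable x ⟨c, Set.mem_insert _ _⟩ := by
      rintro ⟨x, hx⟩
      rcases hx with rfl | hxS
      · rfl
      · exact Adj.reachable
          (show x ≠ c ∧ _ from ⟨fun h => hc (h ▸ hxS), Or.inr ⟨rfl, hxS⟩⟩)
    intro x y
    exact (key x).trans (key y).symm
  · apply star_acyclic (c := ⟨c, Set.mem_insert _ _⟩)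
    rintro ⟨x, hx⟩ ⟨y, hy⟩ hadj
    obtain ⟨-, ⟨h, -⟩ | ⟨h, -⟩⟩ := hadj
    · exact Or.inl (Subtype.ext h)
    · exact Or.inr (Subtype.ext h)

lemma starSub_neighborSet {V : Type*} {S : Set V} {c v : V} (hc : c ∉ S) (hv : v ∈ S) :
    (starSub S c).neighborSet v = {c} := by
  ext w
  constructor
  · rintro ⟨hne, ⟨rfl, -⟩ | ⟨rfl, -⟩⟩
    · exact absurd hv hc
    · rfl
  · rintro rfl
    exact ⟨fun h => hc (h ▸ hv), Or.inr ⟨rfl, hv⟩⟩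

lemma starSub_pendant {V : Type*} {S : Set V} {c : V} (hc : c ∉ S) :
    IsPendantSTree ⊤ S (starSub S c) := by
  refine ⟨Set.subset_insert _ _, starSub_isTree hc, fun v hv => ?_⟩
  rw [starSub_neighborSet hc hv]
  exact Set.ncard_singleton c

lemma starSub_edge_disjoint {V : Type*} {S : Set V} {c c' : V} (hc : c ∉ S)
    (hne : c ≠ c') : (starSub S c).edgeSet ∩ (starSub S c').edgeSet = ∅ := by
  ext e
  induction e using Sym2.ind with
  | _ x y =>
    simp only [Set.mem_inter_iff, Subgraph.mem_edgeSet, Set.mem_empty_iff_false, iff_false]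
    rintro ⟨⟨-, ⟨rfl, h1⟩ | ⟨rfl, h1⟩⟩, ⟨-, ⟨h2, h3⟩ | ⟨h2, h3⟩⟩⟩
    · exact hne h2
    · exact hc h3
    · exact hc h3
    · exact hne h2

lemma starSub_verts_inter {V : Type*} {S : Set V} {c c' : V} (hc : c ∉ S) (hc' : c' ∉ S)
    (hne : c ≠ c') : (starSub S c).verts ∩ (starSub S c').verts = S := by
  ext x
  simp only [starSub, Set.mem_inter_iff, Set.mem_insert_iff]
  constructor
  · rintro ⟨rfl | h1, rfl | h2⟩
    · exact absurd rfl hne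
    · exact absurd h2 hc
    · exact absurd h1 hc'
    · exact h1
  · exact fun h => ⟨Or.inr h, Or.inr h⟩

lemma walk_two_closed {V : Type*} {G : SimpleGraph V} {v x : V}
    (h : ∀ y z : V, G.Adj y z → (y = v ∨ y = x) → (z = v ∨ z = x)) :
    ∀ {u w : V} (_ : G.Walk u w), (u = v ∨ u = x) → (w = v ∨ w = x) := by
  intro u w p
  induction p with
  | nil => exact id
  | cons hadj q ih => exact fun hu => ih (h _ _ hadj hu)

lemma internal_nonempty {V : Type*} {G : SimpleGraph V} {S : Set V} {T : G.Subgraph}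
    (hT : IsPendantSTree G S T) {a b c : V} (ha : a ∈ S) (hb : b ∈ S) (hc : c ∈ S)
    (hab : a ≠ b) (hac : a ≠ c) (hbc : b ≠ c) :
    (T.verts \ S).Nonempty := by
  obtain ⟨hsub, htree, hdeg⟩ := hT
  obtain ⟨x, hxset⟩ := Set.ncard_eq_one.mp (hdeg a ha)
  have hax : T.Adj a x := by
    have : x ∈ T.neighborSet a := hxset ▸ rfl
    exact this
  have hxv : x ∈ T.verts := T.edge_vert hax.symm
  by_cases hxS : x ∈ S
  · exfalso
    obtain ⟨y, hyset⟩ := Set.ncard_eq_one.mp (hdeg x hxS)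
    have hya : y = a := by
      have : a ∈ T.neighborSet x := hax.symm
      rw [hyset] at this
      exact this.symm
    rw [hya] at hyset
    obtain ⟨z, hz, hza, hzx⟩ : ∃ z, z ∈ S ∧ z ≠ a ∧ z ≠ x := by
      by_cases hxb : x = b
      · exact ⟨c, hc, hac.symm, fun h => hbc (hxb ▸ h ▸ rfl)⟩
      · exact ⟨b, hb, hab.symm, fun h => hxb (h ▸ rfl)⟩
    obtain ⟨p⟩ := htree.isConnected.preconnected ⟨a, hsub ha⟩ ⟨z, hsub hz⟩
    have key := walk_two_closed (G := T.coe) (v := ⟨a, hsub ha⟩) (x := ⟨x, hxv⟩)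
      (by
        rintro ⟨y1, hy1⟩ ⟨y2, hy2⟩ hadj (h1 | h1)
        · right
          have h1' : y1 = a := congrArg Subtype.val h1
          have hmem : y2 ∈ T.neighborSet y1 := hadj
          rw [h1', hxset] at hmem
          exact Subtype.ext hmem
        · left
          have h1' : y1 = x := congrArg Subtype.val h1
          have hmem : y2 ∈ T.neighborSet y1 := hadj
          rw [h1', hyset] at hmem
          exact Subtype.ext hmem)
      p (Or.inl rfl)
    rcases key with h | h
    · exact hza (congrArg Subtype.val h)
    · exact hzx (congrArg Subtype.val h)
  · exact ⟨x, hxv, hxS⟩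

lemma three_distinct {α : Type*} [DecidableEq α] (S : Finset α) (h : 3 ≤ S.card) :
    ∃ a ∈ S, ∃ b ∈ S, ∃ c ∈ S, a ≠ b ∧ a ≠ c ∧ b ≠ c := by
  obtain ⟨a, ha⟩ := Finset.card_pos.mp (lt_of_lt_of_le (by norm_num) h)
  have h2 : 0 < (S.erase a).card := by
    rw [Finset.card_erase_of_mem ha]; omega
  obtain ⟨b, hb⟩ := Finset.card_pos.mp h2
  have h3 : 0 < ((S.erase a).erase b).card := by
    rw [Finset.card_erase_of_mem hb, Finset.card_erase_of_mem ha]; omega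
  obtain ⟨c, hc⟩ := Finset.card_pos.mp h3
  refine ⟨a, ha, b, Finset.mem_of_mem_erase hb, c,
    Finset.mem_of_mem_erase (Finset.mem_of_mem_erase hc), ?_, ?_, ?_⟩
  · exact fun h => (Finset.mem_erase.mp hb).1 h.symm
  · exact fun h => (Finset.mem_erase.mp (Finset.mem_of_mem_erase hc)).1 h.symm
  · exact fun h => (Finset.mem_erase.mp hc).1 h.symm

lemma tauLocal_top_fin (n k : ℕ) (hk : 3 ≤ k) (hkn : k ≤ n) (S : Finset (Fin n))
    (hS : S.card = k) : tauLocal (⊤ : SimpleGraph (Fin n)) ↑S = n - k := by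
  classical
  have hpos : 0 < n := by omega
  -- the star family
  have hmem : (n - k) ∈
      {m | ∃ F : Finset (⊤ : SimpleGraph (Fin n)).Subgraph,
        F.card = m ∧ IsIntDisjointFamily ⊤ ↑S F} := by
    refine ⟨Sᶜ.image (fun c => starSub (↑S) c), ?_, ?_, ?_⟩
    · rw [Finset.card_image_of_injOn, Finset.card_compl, Fintype.card_fin, hS]
      intro c hcm c' hcm' heq
      have hv := congrArg Subgraph.verts heq
      simp only [starSub] at hv
      have : c ∈ insert c' (↑S : Set (Fin n)) := hv ▸ Set.mem_insert _ _
      rcases this with h | h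
      · exact h
      · exact absurd h (by simpa using Finset.mem_compl.mp hcm)
    · intro T hT
      obtain ⟨c, hcm, rfl⟩ := Finset.mem_image.mp hT
      exact starSub_pendant (by simpa using Finset.mem_compl.mp hcm)
    · intro T hT T' hT' hne
      obtain ⟨c, hcm, rfl⟩ := Finset.mem_image.mp hT
      obtain ⟨c', hcm', rfl⟩ := Finset.mem_image.mp hT'
      have hcc : c ≠ c' := fun h => hne (by rw [h])
      have hc : c ∉ (↑S : Set (Fin n)) := by simpa using Finset.mem_compl.mp hcm
      have hc' : c' ∉ (↑S : Set (Fin n)) := by simpa using Finset.mem_compl.mp hcm'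
      exact ⟨starSub_edge_disjoint hc hcc, starSub_verts_inter hc hc' hcc⟩
  -- upper bound
  have hbound : ∀ m ∈ {m | ∃ F : Finset (⊤ : SimpleGraph (Fin n)).Subgraph,
      F.card = m ∧ IsIntDisjointFamily ⊤ ↑S F}, m ≤ n - k := by
    rintro m ⟨F, rfl, hfam, hdisj⟩
    obtain ⟨a, ha, b, hb, c, hc, hab, hac, hbc⟩ := three_distinct S (by omega)
    have hne : ∀ T ∈ F, (T.verts \ (↑S : Set (Fin n))).Nonempty := fun T hT =>
      internal_nonempty (hfam T hT) (Finset.mem_coe.mpr ha) (Finset.mem_coe.mpr hb)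
        (Finset.mem_coe.mpr hc) hab hac hbc
    classical
    set f : (⊤ : SimpleGraph (Fin n)).Subgraph → Fin n := fun T =>
      if h : (T.verts \ (↑S : Set (Fin n))).Nonempty then h.some else ⟨0, hpos⟩ with hf
    have hfT : ∀ T ∈ F, f T ∈ T.verts ∧ f T ∉ (↑S : Set (Fin n)) := by
      intro T hT
      have h := hne T hT
      rw [hf]
      simp only [dif_pos h]
      exact ⟨h.some_mem.1, h.some_mem.2⟩
    have hcard : F.card ≤ Sᶜ.card := by
      apply Finset.card_le_card_of_injOn f
      · intro T hT
        exact Finset.mem_compl.mpr (by simpa using (hfT T hT).2)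
      · intro T hT T' hT' heq
        by_contra hne'
        have hint := (hdisj T hT T' hT' hne').2
        have : f T ∈ T.verts ∩ T'.verts := ⟨(hfT T hT).1, heq ▸ (hfT T' hT').1⟩
        rw [hint] at this
        exact (hfT T hT).2 this
    rwa [Finset.card_compl, Fintype.card_fin, hS] at hcard
  have hbdd : BddAbove {m | ∃ F : Finset (⊤ : SimpleGraph (Fin n)).Subgraph,
      F.card = m ∧ IsIntDisjointFamily ⊤ ↑S F} := ⟨n - k, hbound⟩
  exact le_antisymm (csSup_le ⟨n - k, hmem⟩ hbound) (le_csSup hbdd hmem)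

/-- τ_k(K_n) = n - k for 3 ≤ k ≤ n. -/
theorem tau_completeGraph (n k : ℕ) (hk : 3 ≤ k) (hkn : k ≤ n) :
    tau (⊤ : SimpleGraph (Fin n)) k = n - k := by
  have hset : {m | ∃ S : Finset (Fin n), S.card = k ∧
      tauLocal (⊤ : SimpleGraph (Fin n)) ↑S = m} = {n - k} := by
    ext m
    simp only [Set.mem_setOf_eq, Set.mem_singleton_iff]
    constructor
    · rintro ⟨S, hS, rfl⟩
      exact tauLocal_top_fin n k hk hkn S hS
    · rintro rfl
      obtain ⟨S, -, hS⟩ := Finset.exists_subset_card_eq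
        (s := (Finset.univ : Finset (Fin n))) (n := k) (by simpa using hkn)
      exact ⟨S, hS, tauLocal_top_fin n k hk hkn S hS⟩
  rw [tau, hset, csInf_singleton]
end

section
/- If G is a graph with τ_k(G) ≥ ℓ, then the vertex connectivity of G satisfies κ(G) ≥ k + ℓ − 2. -/
open SimpleGraph

private lemma walk_cross' {W : Type*} {H : SimpleGraph W} {A X : Set W}
    (hcl : ∀ u ∈ A, ∀ v, H.Adj u v → v ∈ A ∪ X) :
    ∀ {u b : W} (p : H.Walk u b), u ∈ A → b ∉ A → ∃ x ∈ p.support, x ∈ X := by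
  intro u b p
  induction p with
  | nil => intro hu hb; exact absurd hu hb
  | cons h q ih =>
    intro hu hb
    have hm := hcl _ hu _ h
    rw [Set.mem_union] at hm
    rcases hm with hA | hX
    · obtain ⟨x, hx, hxX⟩ := ih hA hb
      exact ⟨x, by simp [hx], hxX⟩
    · exact ⟨_, by simp, hX⟩

private lemma pendant_small' {V : Type*} {G : SimpleGraph V} {S : Set V} {T : G.Subgraph}
    (hT : IsPendantSTree G S T) (hTv : T.verts ⊆ S) {u : V} (hu : u ∈ S) :
    ∃ w, T.Adj u w ∧ ∀ z ∈ S, z = u ∨ z = w := by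
  obtain ⟨hSsub, htree, hdeg⟩ := hT
  obtain ⟨w, hw⟩ := Set.ncard_eq_one.mp (hdeg u hu)
  have hadj : T.Adj u w := by
    have : w ∈ T.neighborSet u := by rw [hw]; exact rfl
    exact this
  have hwS : w ∈ S := hTv hadj.snd_mem
  obtain ⟨c, hc⟩ := Set.ncard_eq_one.mp (hdeg w hwS)
  have hcu : c = u := by
    have : u ∈ T.neighborSet w := hadj.symm
    rw [hc] at this; exact this.symm
  refine ⟨w, hadj, fun z hz => ?_⟩
  have hzv : z ∈ T.verts := hSsub hz
  obtain ⟨p⟩ := htree.isConnected.preconnected ⟨u, hSsub hu⟩ ⟨z, hzv⟩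
  have hcl' : ∀ x ∈ {x : T.verts | (x : V) = u ∨ (x : V) = w}, ∀ y,
      T.coe.Adj x y → y ∈ {x : T.verts | (x : V) = u ∨ (x : V) = w} ∪ (∅ : Set T.verts) := by
    rintro x hx y hxy
    rcases hx with hx | hx
    · have h1 : T.Adj u (y : V) := by rw [← hx]; exact hxy
      have h2 : (y : V) ∈ T.neighborSet u := h1
      rw [hw] at h2
      exact Or.inl (Or.inr h2)
    · have h1 : T.Adj w (y : V) := by rw [← hx]; exact hxy
      have h2 : (y : V) ∈ T.neighborSet w := h1
      rw [hc, hcu] at h2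
      exact Or.inl (Or.inl h2)
  by_contra hcon
  push_neg at hcon
  obtain ⟨x, _, hx⟩ := walk_cross' hcl' p (Or.inl rfl) (fun hz => by
    rcases hz with h1 | h1
    · exact hcon.1 h1
    · exact hcon.2 h1)
  exact hx

private lemma tree_cross' {V : Type*} {G : SimpleGraph V} {S A X : Set V} {T : G.Subgraph}
    {a b : V}
    (hT : IsPendantSTree G S T) (ha : a ∈ S) (hb : b ∈ S)
    (haA : a ∈ A) (hbA : b ∉ A) (haX : a ∉ X) (hbX : b ∉ X)
    (hcl : ∀ u ∈ A, ∀ v, G.Adj u v → v ∈ A ∪ X) :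
    ∃ x, x ∈ X ∧ x ∉ S ∧ x ∈ T.verts := by
  classical
  obtain ⟨hSsub, htree, hdeg⟩ := hT
  set aa : T.verts := ⟨a, hSsub ha⟩ with haa
  set bb : T.verts := ⟨b, hSsub hb⟩ with hbb
  obtain ⟨p0⟩ := htree.isConnected.preconnected aa bb
  set p : T.coe.Walk aa bb := (p0.toPath : T.coe.Path aa bb).1 with hp
  have hpath : p.IsPath := p0.toPath.2
  have hcl' : ∀ x ∈ {x : T.verts | (x : V) ∈ A}, ∀ y,
      T.coe.Adj x y → y ∈ {x : T.verts | (x : V) ∈ A} ∪ {x : T.verts | (x : V) ∈ X} := by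
    intro x hx y hxy
    have hg : G.Adj (x : V) (y : V) := T.adj_sub hxy
    have := hcl _ hx _ hg
    rw [Set.mem_union] at this
    rcases this with h1 | h1
    · exact Or.inl h1
    · exact Or.inr h1
  obtain ⟨zz, hzsup, hzX⟩ := walk_cross' hcl' p haA hbA
  have hza : zz ≠ aa := fun h => haX (by rw [h] at hzX; exact hzX)
  have hzb : zz ≠ bb := fun h => hbX (by rw [h] at hzX; exact hzX)
  refine ⟨(zz : V), hzX, ?_, zz.2⟩
  intro hzS
  obtain ⟨c, hc⟩ := Set.ncard_eq_one.mp (hdeg _ hzS)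
  set q1 : T.coe.Walk aa zz := p.takeUntil zz hzsup with hq1
  set q2 : T.coe.Walk zz bb := p.dropUntil zz hzsup with hq2
  have hspec : q1.append q2 = p := p.take_spec hzsup
  have hq1nil : ¬ q1.reverse.Nil :=
    SimpleGraph.Walk.not_nil_of_ne hza
  obtain ⟨u, hadju, q1', hq1'⟩ := SimpleGraph.Walk.not_nil_iff.mp hq1nil
  have hq2nil : ¬ q2.Nil := SimpleGraph.Walk.not_nil_of_ne hzb
  obtain ⟨v, hadjv, q2', hq2'⟩ := SimpleGraph.Walk.not_nil_iff.mp hq2nil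
  have huq : u ∈ q1.support := by
    have : u ∈ q1.reverse.support := by
      rw [hq1']
      simp [SimpleGraph.Walk.support_cons]
    rwa [SimpleGraph.Walk.support_reverse, List.mem_reverse] at this
  have hvq : v ∈ q2.support.tail := by
    rw [hq2']
    simp [SimpleGraph.Walk.support_cons]
  have hnodup : (q1.support ++ q2.support.tail).Nodup := by
    rw [← SimpleGraph.Walk.support_append, hspec]
    exact hpath.support_nodup
  have huv : u ≠ v := by
    intro h
    exact (List.disjoint_of_nodup_append hnodup) huq (h ▸ hvq)
  have hu' : (u : V) ∈ T.neighborSet (zz : V) := hadju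
  have hv' : (v : V) ∈ T.neighborSet (zz : V) := hadjv
  rw [hc] at hu' hv'
  exact huv (Subtype.ext (hu'.trans hv'.symm))

/-- If τ_k(G) ≥ ℓ then κ(G) ≥ k + ℓ - 2. -/
theorem kappa_of_tau {V : Type*} [Fintype V]
    (G : SimpleGraph V) (k ℓ : ℕ)
    (hk : 2 ≤ k) (hkn : k ≤ Fintype.card V) (hℓ : 1 ≤ ℓ)
    (h : ℓ ≤ tau G k) :
    k + ℓ - 2 ≤ kappa G := by
  classical
  -- lower bound on tauLocal for every k-set
  have htl : ∀ Sf : Finset V, Sf.card = k → ℓ ≤ tauLocal G ↑Sf := by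
    intro Sf hSf
    exact h.trans (Nat.sInf_le ⟨Sf, hSf, rfl⟩)
  -- upper bound on tauLocal from a bound on families
  have hub : ∀ (S : Set V) (c : ℕ),
      (∀ F : Finset G.Subgraph, IsIntDisjointFamily G S F → F.card ≤ c) →
      tauLocal G S ≤ c := by
    intro S c hF
    apply csSup_le
    · exact ⟨0, ∅, Finset.card_empty, ⟨fun T hT => absurd hT (Finset.notMem_empty T),
        fun T hT => absurd hT (Finset.notMem_empty T)⟩⟩
    · rintro m ⟨F, rfl, hFam⟩
      exact hF F hFam
  -- Lemma A : ℓ ≤ n - k + 1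
  have hA : ℓ ≤ Fintype.card V - k + 1 := by
    obtain ⟨Sf, -, hSf⟩ := Finset.exists_subset_card_eq (s := Finset.univ) (n := k)
      (by simpa using hkn)
    have hSne : Sf.Nonempty := by
      rw [← Finset.card_pos, hSf]; omega
    obtain ⟨u0, hu0⟩ := hSne
    refine le_trans (htl Sf hSf) (le_trans (hub _ (Fintype.card V - k + 1) ?_) le_rfl)
    intro F hFam
    set P : G.Subgraph → Prop := fun T => ∃ v, v ∈ T.verts ∧ v ∉ (↑Sf : Set V) with hP
    have hsplit := Finset.card_filter_add_card_filter_not (s := F) (p := P)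
    have h1 : (F.filter P).card ≤ (Finset.univ \ Sf).card := by
      apply Finset.card_le_card_of_injOn (fun T => if h : P T then h.choose else u0)
      · intro T hT
        rw [Finset.mem_coe, Finset.mem_filter] at hT
        rw [Finset.mem_coe]; dsimp only
        rw [dif_pos hT.2]
        have hspec := hT.2.choose_spec
        simp only [Finset.mem_sdiff, Finset.mem_univ, true_and]
        intro hmem
        exact hspec.2 (Finset.mem_coe.mpr hmem)
      · intro T hT T' hT' heq
        by_contra hne
        rw [Finset.mem_coe, Finset.mem_filter] at hT hT'
        have hver := (hFam.2 T hT.1 T' hT'.1 hne).2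
        have hspec := hT.2.choose_spec
        have hspec' := hT'.2.choose_spec
        simp only [dif_pos hT.2, dif_pos hT'.2] at heq
        have hx : hT.2.choose ∈ T.verts ∩ T'.verts := ⟨hspec.1, heq ▸ hspec'.1⟩
        rw [hver] at hx
        exact hspec.2 hx
    have h2 : (F.filter (fun T => ¬ P T)).card ≤ 1 := by
      rw [Finset.card_le_one]
      intro T hT T' hT'
      rw [Finset.mem_filter] at hT hT'
      have hTv : T.verts ⊆ (↑Sf : Set V) := by
        intro v hv
        by_contra hvs
        exact hT.2 ⟨v, hv, hvs⟩
      have hTv' : T'.verts ⊆ (↑Sf : Set V) := by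
        intro v hv
        by_contra hvs
        exact hT'.2 ⟨v, hv, hvs⟩
      have hu0' : (u0 : V) ∈ (↑Sf : Set V) := Finset.mem_coe.mpr hu0
      obtain ⟨w, hadj, hall⟩ := pendant_small' (hFam.1 T hT.1) hTv hu0'
      obtain ⟨w', hadj', hall'⟩ := pendant_small' (hFam.1 T' hT'.1) hTv' hu0'
      have hw'S : (w' : V) ∈ (↑Sf : Set V) := hTv' hadj'.snd_mem
      have hw'w : w' = w := by
        rcases hall w' hw'S with h1 | h1
        · exact absurd h1.symm (T'.adj_sub hadj').ne
        · exact h1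
      by_contra hne
      have hdisj := (hFam.2 T hT.1 T' hT'.1 hne).1
      have he : s(u0, w) ∈ T.edgeSet ∩ T'.edgeSet :=
        ⟨SimpleGraph.Subgraph.mem_edgeSet.mpr hadj,
         SimpleGraph.Subgraph.mem_edgeSet.mpr (hw'w ▸ hadj')⟩
      rw [hdisj] at he
      exact he
    have hcard : (Finset.univ \ Sf).card = Fintype.card V - k := by
      rw [Finset.card_sdiff_of_subset (Finset.subset_univ _), Finset.card_univ, hSf]
    omega
  -- main contradiction
  by_contra hcon
  push_neg at hcon
  have hne : {m | ∃ S : Finset V, S.card = m ∧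
      (¬ ((⊤ : G.Subgraph).deleteVerts ↑S).coe.Connected ∨
        Fintype.card V - S.card ≤ 1)}.Nonempty :=
    ⟨Finset.univ.card, Finset.univ, rfl, Or.inr (by simp)⟩
  obtain ⟨Xf, hXcard, hXprop⟩ := Nat.sInf_mem hne
  have hXlt : Xf.card < k + ℓ - 2 := by rw [hXcard]; exact hcon
  have hXn : Xf.card ≤ Fintype.card V - 2 := by omega
  rcases hXprop with hdis | hbig
  swap
  · omega
  -- the disconnected case
  have hVne : (Finset.univ \ Xf).Nonempty := by
    rw [← Finset.card_pos, Finset.card_sdiff_of_subset (Finset.subset_univ _), Finset.card_univ]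
    omega
  obtain ⟨v0, hv0⟩ := hVne
  have hv0' : v0 ∈ ((⊤ : G.Subgraph).deleteVerts ↑Xf).verts := by
    rw [SimpleGraph.Subgraph.deleteVerts_verts, SimpleGraph.Subgraph.verts_top]
    rw [Finset.mem_sdiff] at hv0
    exact ⟨trivial, fun hm => hv0.2 (Finset.mem_coe.mp hm)⟩
  have hpre : ¬ ((⊤ : G.Subgraph).deleteVerts ↑Xf).coe.Preconnected := by
    intro hp
    exact hdis ((SimpleGraph.connected_iff _).mpr ⟨hp, ⟨⟨v0, hv0'⟩⟩⟩)
  simp only [SimpleGraph.Preconnected] at hpre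
  push_neg at hpre
  obtain ⟨a', b', hnr⟩ := hpre
  set a : V := (a' : V) with haeq
  set b : V := (b' : V) with hbeq
  set A : Set V := (fun z : ((⊤ : G.Subgraph).deleteVerts ↑Xf).verts => (z : V)) ''
    {z | ((⊤ : G.Subgraph).deleteVerts ↑Xf).coe.Reachable a' z} with hA'
  have haA : a ∈ A := ⟨a', SimpleGraph.Reachable.refl _, rfl⟩
  have hbA : b ∉ A := by
    rintro ⟨z, hz, hzb⟩
    exact hnr (hz.trans (by rw [Subtype.ext hzb]))
  have hnotX : ∀ v ∈ A, v ∉ (↑Xf : Set V) := by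
    rintro v ⟨z, hz, rfl⟩
    exact z.2.2
  have haXf : a ∉ (↑Xf : Set V) := hnotX a haA
  have hbXf : b ∉ (↑Xf : Set V) := b'.2.2
  have hcl : ∀ u ∈ A, ∀ v, G.Adj u v → v ∈ A ∪ (↑Xf : Set V) := by
    rintro u ⟨z, hz, rfl⟩ v hadj
    by_cases hvX : v ∈ (↑Xf : Set V)
    · exact Or.inr hvX
    · left
      have hv : v ∈ ((⊤ : G.Subgraph).deleteVerts ↑Xf).verts := by
        rw [SimpleGraph.Subgraph.deleteVerts_verts, SimpleGraph.Subgraph.verts_top]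
        exact ⟨trivial, hvX⟩
      have hDadj : ((⊤ : G.Subgraph).deleteVerts ↑Xf).coe.Adj z ⟨v, hv⟩ := by
        rw [SimpleGraph.Subgraph.coe_adj, SimpleGraph.Subgraph.deleteVerts_adj]
        exact ⟨trivial, z.2.2, trivial, hvX, SimpleGraph.Subgraph.top_adj.mpr hadj⟩
      exact ⟨⟨v, hv⟩, hz.trans hDadj.reachable, rfl⟩
  have hab : a ≠ b := fun hh => hbA (hh ▸ haA)
  -- choose the set S
  set m : ℕ := min (k - 2) Xf.card with hm
  obtain ⟨X', hX'sub, hX'card⟩ := Finset.exists_subset_card_eq (s := Xf) (n := m) (min_le_right _ _)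
  have hWcard : (Xf ∪ {a, b}).card ≤ Xf.card + 2 := by
    refine le_trans (Finset.card_union_le _ _) ?_
    have : ({a, b} : Finset V).card ≤ 2 :=
      le_trans (Finset.card_insert_le _ _) (by simp)
    omega
  have hpad : k - 2 - m ≤ (Finset.univ \ (Xf ∪ {a, b})).card := by
    rw [Finset.card_sdiff_of_subset (Finset.subset_univ _), Finset.card_univ]
    omega
  obtain ⟨Pf, hPsub, hPcard⟩ := Finset.exists_subset_card_eq hpad
  set Sf : Finset V := (X' ∪ Pf) ∪ {a, b} with hSf
  have haSf : a ∈ Sf := by simp [hSf]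
  have hbSf : b ∈ Sf := by simp [hSf]
  have haXf' : a ∉ Xf := fun hh => haXf (Finset.mem_coe.mpr hh)
  have hbXf' : b ∉ Xf := fun hh => hbXf (Finset.mem_coe.mpr hh)
  have hPdisj : ∀ x ∈ Pf, x ∉ Xf ∧ x ≠ a ∧ x ≠ b := by
    intro x hx
    have := hPsub hx
    rw [Finset.mem_sdiff, Finset.mem_union, Finset.mem_insert, Finset.mem_singleton] at this
    push_neg at this
    exact ⟨this.2.1, this.2.2.1, this.2.2.2⟩
  have hXP : Disjoint X' Pf := by
    rw [Finset.disjoint_left]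
    intro x hx hxP
    exact (hPdisj x hxP).1 (hX'sub hx)
  have hXPab : Disjoint (X' ∪ Pf) ({a, b} : Finset V) := by
    rw [Finset.disjoint_left]
    intro x hx hxab
    rw [Finset.mem_union] at hx
    rw [Finset.mem_insert, Finset.mem_singleton] at hxab
    rcases hx with hx | hx
    · rcases hxab with rfl | rfl
      · exact haXf' (hX'sub hx)
      · exact hbXf' (hX'sub hx)
    · rcases hxab with rfl | rfl
      · exact (hPdisj _ hx).2.1 rfl
      · exact (hPdisj _ hx).2.2 rfl
  have hScard : Sf.card = k := by
    rw [hSf, Finset.card_union_of_disjoint hXPab, Finset.card_union_of_disjoint hXP,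
      hX'card, hPcard, Finset.card_insert_of_notMem (by simpa using hab),
      Finset.card_singleton]
    omega
  -- bound families for this S
  have hbound : ∀ F : Finset G.Subgraph, IsIntDisjointFamily G (↑Sf) F →
      F.card ≤ (Xf \ X').card := by
    intro F hFam
    have hex : ∀ T ∈ F, ∃ x, x ∈ (↑Xf : Set V) ∧ x ∉ (↑Sf : Set V) ∧ x ∈ T.verts := by
      intro T hT
      exact tree_cross' (hFam.1 T hT) (Finset.mem_coe.mpr haSf) (Finset.mem_coe.mpr hbSf)
        haA hbA haXf hbXf hcl
    apply Finset.card_le_card_of_injOn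
      (fun T => if h : ∃ x, x ∈ (↑Xf : Set V) ∧ x ∉ (↑Sf : Set V) ∧ x ∈ T.verts
        then h.choose else a)
    · intro T hT
      rw [Finset.mem_coe]; dsimp only
      rw [dif_pos (hex T hT)]
      have hspec := (hex T hT).choose_spec
      rw [Finset.mem_sdiff]
      refine ⟨Finset.mem_coe.mp hspec.1, fun hmem => ?_⟩
      exact hspec.2.1 (Finset.mem_coe.mpr
        (Finset.mem_union_left _ (Finset.mem_union_left _ hmem)))
    · intro T hT T' hT' heq
      by_contra hne
      rw [Finset.mem_coe] at hT hT'
      have hver := (hFam.2 T hT T' hT' hne).2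
      have hspec := (hex T hT).choose_spec
      have hspec' := (hex T' hT').choose_spec
      simp only [dif_pos (hex T hT), dif_pos (hex T' hT')] at heq
      have hx : (hex T hT).choose ∈ T.verts ∩ T'.verts :=
        ⟨hspec.2.2, heq ▸ hspec'.2.2⟩
      rw [hver] at hx
      exact hspec.2.1 hx
  have hfin : ℓ ≤ (Xf \ X').card := le_trans (htl Sf hScard) (hub _ _ hbound)
  rw [Finset.card_sdiff_of_subset hX'sub, hX'card] at hfin
  omega
end

section
/- Let G be a graph of order n ≥ 4. Then μ_{n−1}(G) = ⌊λ(G)/(n−1)⌋, where λ(G) is the edge-connectivity of G. -/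
open SimpleGraph

lemma reach_closed {W : Type*} (H : SimpleGraph W) (P : W → Prop)
    (hP : ∀ x y, H.Adj x y → P x → P y) :
    ∀ a b, H.Reachable a b → P a → P b := by
  intro a b hr ha
  obtain ⟨p⟩ := hr
  induction p with
  | nil => exact ha
  | cons h q ih => exact ih (hP _ _ h ha)

lemma star_isTree {W : Type*} (c : W) (H : SimpleGraph W)
    (hadj : ∀ x y, H.Adj x y ↔ (x = c ∧ y ≠ c) ∨ (y = c ∧ x ≠ c)) : H.IsTree := by
  classical
  have hacyc : ∀ (p : H.Walk c c), ¬ p.IsCycle := by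
    classical
    intro p hp
    cases p with
    | nil => exact hp.not_of_nil
    | cons h q =>
      rename_i b
      have hbc : b ≠ c := fun hb => H.irrefl (hb ▸ h)
      cases q with
      | nil => exact hbc rfl
      | cons h' r =>
        rename_i x
        have hxc : x = c := by
          rcases (hadj b x).mp h' with ⟨h1, _⟩ | ⟨h1, _⟩
          · exact absurd h1 hbc
          · exact h1
        subst hxc
        have h3 := hp.three_le_length
        simp only [SimpleGraph.Walk.length_cons] at h3
        cases r with
        | nil => simp at h3
        | cons h'' r' =>
          have hnd := hp.2
          simp only [SimpleGraph.Walk.support_cons, List.tail_cons, List.nodup_cons] at hnd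
          exact hnd.2.1 (by simp [SimpleGraph.Walk.end_mem_support])
  have : Nonempty W := ⟨c⟩
  constructor
  · refine ⟨fun x y => ?_⟩
    have key : ∀ z, H.Reachable z c := by
      intro z
      by_cases hz : z = c
      · subst hz; exact Reachable.refl _
      · exact SimpleGraph.Adj.reachable ((hadj z c).mpr (Or.inr ⟨rfl, hz⟩))
    exact (key x).trans (key y).symm
  · intro a p hp
    have hc : c ∈ p.support := by
      cases p with
      | nil => exact absurd hp (SimpleGraph.Walk.IsCycle.not_of_nil)
      | cons h q =>
        rcases (hadj _ _).mp h with ⟨h1, _⟩ | ⟨h1, _⟩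
        · exact h1 ▸ SimpleGraph.Walk.start_mem_support _
        · subst h1; simp
    exact hacyc _ (hp.rotate hc)


lemma pendant_rigid {V : Type*} [Fintype V] (G : SimpleGraph V) (hn : 4 ≤ Fintype.card V)
    (v : V) (T : G.Subgraph) (hT : IsPendantSTree G {x | x ≠ v} T) :
    ∀ s, s ≠ v → T.neighborSet s = {v} := by
  classical
  obtain ⟨hSsub, htree, hdeg⟩ := hT
  intro s hs
  obtain ⟨w, hw⟩ : ∃ w, T.neighborSet s = {w} := Set.ncard_eq_one.mp (hdeg s hs)
  suffices hwv : w = v by rw [hw, hwv]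
  by_contra hwv
  have hAdjsw : T.Adj s w := by
    have : w ∈ T.neighborSet s := hw ▸ rfl
    exact this
  have hw' : T.neighborSet w = {s} := by
    obtain ⟨u, hu⟩ : ∃ u, T.neighborSet w = {u} := Set.ncard_eq_one.mp (hdeg w hwv)
    have : s ∈ T.neighborSet w := hAdjsw.symm
    rw [hu] at this
    rw [hu, this]
  -- find a fourth vertex
  obtain ⟨t, ht⟩ : ∃ t : V, t ∉ ({s, w, v} : Finset V) := by
    have h1 : ({s, w, v} : Finset V).card ≤ 3 := by
      apply le_trans (Finset.card_insert_le _ _)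
      have := Finset.card_insert_le w ({v} : Finset V)
      simp at this ⊢; omega
    have h2 := Finset.card_le_card_sdiff_add_card (s := (Finset.univ : Finset V)) (t := {s, w, v})
    have h3 : 0 < (Finset.univ \ ({s, w, v} : Finset V)).card := by
      simp only [Finset.card_univ] at h2; omega
    obtain ⟨t, ht⟩ := Finset.card_pos.mp h3
    exact ⟨t, (Finset.mem_sdiff.mp ht).2⟩
  simp only [Finset.mem_insert, Finset.mem_singleton, not_or] at ht
  obtain ⟨hts, htw, htv⟩ := ht
  have hsmem : s ∈ T.verts := hSsub hs
  have htmem : t ∈ T.verts := hSsub htv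
  have hreach : T.coe.Reachable ⟨s, hsmem⟩ ⟨t, htmem⟩ := htree.isConnected.preconnected _ _
  have := reach_closed T.coe (fun x => x.val = s ∨ x.val = w)
    (by
      rintro ⟨x, hx⟩ ⟨y, hy⟩ hadj hP
      rcases hP with h | h
      · subst h
        have : y ∈ T.neighborSet x := hadj
        rw [hw] at this; exact Or.inr this
      · subst h
        have : y ∈ T.neighborSet x := hadj
        rw [hw'] at this; exact Or.inl this)
    _ _ hreach (Or.inl rfl)
  rcases this with h | h
  · exact hts h
  · exact htw h



lemma pendant_edge {V : Type*} [Fintype V] (G : SimpleGraph V) (hn : 4 ≤ Fintype.card V)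
    (v : V) (T : G.Subgraph) (hT : IsPendantSTree G {x | x ≠ v} T)
    (s : V) (hs : s ≠ v) : s(s, v) ∈ T.edgeSet := by
  have h := pendant_rigid G hn v T hT s hs
  have : v ∈ T.neighborSet s := h ▸ rfl
  exact this

lemma zero_mem_muSet {V : Type*} (G : SimpleGraph V) (S : Set V) :
    0 ∈ {n | ∃ F : Finset G.Subgraph, F.card = n ∧ IsEdgeDisjointFamily G S F} := by
  exact ⟨∅, rfl, ⟨fun T hT => absurd hT (Finset.notMem_empty T),
    fun T hT => absurd hT (Finset.notMem_empty T)⟩⟩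

lemma muSet_le_one {V : Type*} [Fintype V] (G : SimpleGraph V) (hn : 4 ≤ Fintype.card V)
    (v : V) :
    ∀ m ∈ {n | ∃ F : Finset G.Subgraph, F.card = n ∧
      IsEdgeDisjointFamily G {x | x ≠ v} F}, m ≤ 1 := by
  rintro m ⟨F, hcard, hfam, hdisj⟩
  by_contra hm
  push_neg at hm
  rw [← hcard] at hm
  obtain ⟨T, hT, T', hT', hne⟩ := Finset.one_lt_card.mp hm
  -- find s ≠ v
  have : Nontrivial V := Fintype.one_lt_card_iff_nontrivial.mp (by omega)
  obtain ⟨s, hs⟩ := exists_ne v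
  have h1 := pendant_edge G hn v T (hfam T hT) s hs
  have h2 := pendant_edge G hn v T' (hfam T' hT') s hs
  have := hdisj T hT T' hT' hne
  have : s(s, v) ∈ T.edgeSet ∩ T'.edgeSet := ⟨h1, h2⟩
  rw [hdisj T hT T' hT' hne] at this
  exact this

lemma muLocal_le_one {V : Type*} [Fintype V] (G : SimpleGraph V) (hn : 4 ≤ Fintype.card V)
    (v : V) : muLocal G {x | x ≠ v} ≤ 1 :=
  csSup_le ⟨0, zero_mem_muSet G _⟩ (muSet_le_one G hn v)

lemma muLocal_eq_zero {V : Type*} [Fintype V] (G : SimpleGraph V) (hn : 4 ≤ Fintype.card V)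
    (u v : V) (huv : u ≠ v) (hnadj : ¬ G.Adj u v) : muLocal G {x | x ≠ v} = 0 := by
  have hset : {n | ∃ F : Finset G.Subgraph, F.card = n ∧
      IsEdgeDisjointFamily G {x | x ≠ v} F} = {0} := by
    apply Set.eq_singleton_iff_unique_mem.mpr
    refine ⟨zero_mem_muSet G _, ?_⟩
    rintro m ⟨F, hcard, hfam, -⟩
    rcases Finset.eq_empty_or_nonempty F with rfl | ⟨T, hT⟩
    · exact hcard.symm
    · exfalso
      have := pendant_edge G hn v T (hfam T hT) u huv
      rw [SimpleGraph.Subgraph.mem_edgeSet] at this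
      exact hnadj (T.adj_sub this)
  rw [muLocal, hset, csSup_singleton]

def starSubgraph {V : Type*} (G : SimpleGraph V) (v : V)
    (h : ∀ s, s ≠ v → G.Adj v s) : G.Subgraph where
  verts := Set.univ
  Adj x y := (x = v ∧ y ≠ v) ∨ (y = v ∧ x ≠ v)
  adj_sub := by
    rintro x y (⟨rfl, hy⟩ | ⟨rfl, hx⟩)
    · exact h y hy
    · exact (h x hx).symm
  edge_vert := fun _ => trivial
  symm := ⟨by rintro x y (⟨rfl, hy⟩ | ⟨rfl, hx⟩) <;> tauto⟩

lemma starSubgraph_pendant {V : Type*} [Fintype V] (G : SimpleGraph V)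
    (v : V) (h : ∀ s, s ≠ v → G.Adj v s) :
    IsPendantSTree G {x | x ≠ v} (starSubgraph G v h) := by
  refine ⟨fun x _ => trivial, ?_, ?_⟩
  · apply star_isTree (⟨v, trivial⟩ : (starSubgraph G v h).verts)
    rintro ⟨x, hx⟩ ⟨y, hy⟩
    show (x = v ∧ y ≠ v) ∨ (y = v ∧ x ≠ v) ↔ _
    simp [Subtype.ext_iff]
  · intro s hs
    have : (starSubgraph G v h).neighborSet s = {v} := by
      ext y
      show (s = v ∧ y ≠ v) ∨ (y = v ∧ s ≠ v) ↔ y ∈ ({v} : Set V)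
      simp only [Set.mem_singleton_iff]
      constructor
      · rintro (⟨h1, -⟩ | ⟨h1, -⟩)
        · exact absurd h1 hs
        · exact h1
      · rintro rfl; exact Or.inr ⟨rfl, hs⟩
    rw [this, Set.ncard_singleton]

lemma muLocal_eq_one {V : Type*} [Fintype V] (G : SimpleGraph V) (hn : 4 ≤ Fintype.card V)
    (v : V) (h : ∀ s, s ≠ v → G.Adj v s) : muLocal G {x | x ≠ v} = 1 := by
  refine le_antisymm (muLocal_le_one G hn v) ?_
  apply le_csSup ⟨1, muSet_le_one G hn v⟩
  refine ⟨{starSubgraph G v h}, Finset.card_singleton _, ?_, ?_⟩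
  · intro T hT
    rw [Finset.mem_singleton] at hT
    exact hT ▸ starSubgraph_pendant G v h
  · intro T hT T' hT' hne
    rw [Finset.mem_singleton] at hT hT'
    exact absurd (hT.trans hT'.symm) hne


lemma not_connected_of_isolated {V : Type*} (H : SimpleGraph V) (u w : V) (hne : w ≠ u)
    (h : ∀ x, ¬ H.Adj u x) : ¬ H.Connected := by
  intro hc
  obtain ⟨p⟩ := hc.preconnected u w
  cases p with
  | nil => exact hne rfl
  | cons h' q => exact h _ h'

lemma incidence_mem {V : Type*} [Fintype V] [DecidableEq V] (G : SimpleGraph V)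
    [DecidableRel G.Adj] (u x : V) (h : G.Adj u x) : s(u, x) ∈ G.incidenceFinset u := by
  rw [SimpleGraph.mem_incidenceFinset]
  exact ⟨h, Sym2.mem_mk_left u x⟩

lemma incidence_cut_mem {V : Type*} [Fintype V] [DecidableEq V] (G : SimpleGraph V)
    [DecidableRel G.Adj] (hn : 2 ≤ Fintype.card V) (u : V) :
    (G.incidenceFinset u).card ∈ {n | ∃ F : Finset (Sym2 V), F.card = n ∧ ↑F ⊆ G.edgeSet ∧
      ¬ (G.deleteEdges ↑F).Connected} := by
  obtain ⟨w, hw⟩ : ∃ w : V, w ≠ u := by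
    have : Nontrivial V := Fintype.one_lt_card_iff_nontrivial.mp (by omega)
    exact exists_ne u
  refine ⟨G.incidenceFinset u, rfl, ?_, ?_⟩
  · intro e he
    rw [Finset.mem_coe, SimpleGraph.mem_incidenceFinset] at he
    exact he.1
  · apply not_connected_of_isolated _ u w hw
    intro x hadj
    rw [SimpleGraph.deleteEdges_adj] at hadj
    exact hadj.2 (Finset.mem_coe.mpr (incidence_mem G u x hadj.1))

lemma edgeConn_le_sub_two {V : Type*} [Fintype V] (G : SimpleGraph V)
    (hn : 4 ≤ Fintype.card V) (u v : V) (huv : u ≠ v) (hnadj : ¬ G.Adj u v) :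
    edgeConn G ≤ Fintype.card V - 2 := by
  classical
  have hmem := incidence_cut_mem G (by omega) u
  have hcard : (G.incidenceFinset u).card ≤ Fintype.card V - 2 := by
    rw [SimpleGraph.card_incidenceFinset_eq_degree, SimpleGraph.degree]
    have hsub : G.neighborFinset u ⊆ Finset.univ \ {u, v} := by
      intro x hx
      rw [SimpleGraph.mem_neighborFinset] at hx
      simp only [Finset.mem_sdiff, Finset.mem_univ, Finset.mem_insert, Finset.mem_singleton,
        true_and, not_or]
      exact ⟨fun h => G.irrefl (h ▸ hx), fun h => hnadj (h ▸ hx)⟩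
    calc (G.neighborFinset u).card ≤ (Finset.univ \ ({u, v} : Finset V)).card :=
          Finset.card_le_card hsub
      _ = Fintype.card V - 2 := by
          rw [Finset.card_sdiff_of_subset (Finset.subset_univ _), Finset.card_univ,
            Finset.card_insert_of_notMem (by simpa using huv), Finset.card_singleton]
  exact le_trans (Nat.sInf_le hmem) hcard

lemma complete_del_connected {V : Type*} [Fintype V] (G : SimpleGraph V)
    (hn : 4 ≤ Fintype.card V) (hcomp : ∀ x y : V, x ≠ y → G.Adj x y)
    (F : Finset (Sym2 V)) (hF : F.card + 1 < Fintype.card V) :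
    (G.deleteEdges ↑F).Connected := by
  classical
  have hne : Nonempty V := Fintype.card_pos_iff.mp (by omega)
  refine ⟨fun u w => ?_⟩
  by_cases huw : u = w
  · exact huw ▸ Reachable.refl u
  by_cases he : s(u, w) ∈ F
  · set C : Finset V := Finset.univ \ {u, w} with hC
    set B : Finset V := C.filter (fun x => s(u, x) ∈ F ∨ s(x, w) ∈ F) with hB
    have hCcard : C.card = Fintype.card V - 2 := by
      rw [hC, Finset.card_sdiff_of_subset (Finset.subset_univ _), Finset.card_univ,
        Finset.card_insert_of_notMem (by simpa using huw), Finset.card_singleton]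
    have hBcard : B.card ≤ F.card - 1 := by
      have := Finset.card_le_card_of_injOn
        (f := fun x => if s(u, x) ∈ F then s(u, x) else s(x, w))
        (s := B) (t := F.erase s(u, w)) ?_ ?_
      · simpa [Finset.card_erase_of_mem he] using this
      · intro x hx
        rw [Finset.mem_coe, hB, Finset.mem_filter] at hx
        obtain ⟨hxC, hor⟩ := hx
        rw [hC, Finset.mem_sdiff] at hxC
        simp only [Finset.mem_insert, Finset.mem_singleton, not_or] at hxC
        obtain ⟨-, hxu, hxw⟩ := hxC
        by_cases h1 : s(u, x) ∈ F
        · simp only [h1, if_true]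
          refine Finset.mem_erase.mpr ⟨?_, h1⟩
          intro hcon
          rw [Sym2.eq_iff] at hcon
          rcases hcon with ⟨-, h⟩ | ⟨h, -⟩
          · exact hxw h
          · exact huw h
        · simp only [h1, if_false]
          have h2 : s(x, w) ∈ F := hor.resolve_left h1
          refine Finset.mem_erase.mpr ⟨?_, h2⟩
          intro hcon
          rw [Sym2.eq_iff] at hcon
          rcases hcon with ⟨h, -⟩ | ⟨-, h⟩
          · exact hxu h
          · exact huw h.symm
      · intro x1 hx1 x2 hx2 heq
        have hmem : ∀ x ∈ B, x ≠ u ∧ x ≠ w := by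
          intro x hx
          rw [hB, Finset.mem_filter, hC, Finset.mem_sdiff] at hx
          have hx' := hx.1.2
          simp only [Finset.mem_insert, Finset.mem_singleton, not_or] at hx'
          exact hx'
        obtain ⟨h1u, h1w⟩ := hmem x1 hx1
        obtain ⟨h2u, h2w⟩ := hmem x2 hx2
        by_cases a1 : s(u, x1) ∈ F <;> by_cases a2 : s(u, x2) ∈ F <;>
          simp only [a1, a2, if_true, if_false] at heq <;> rw [Sym2.eq_iff] at heq
        · rcases heq with ⟨-, h⟩ | ⟨h, -⟩
          · exact h
          · exact absurd h.symm h2u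
        · rcases heq with ⟨h, h'⟩ | ⟨h, h'⟩
          · exact absurd h.symm h2u
          · exact absurd h huw
        · rcases heq with ⟨h, h'⟩ | ⟨h, h'⟩
          · exact absurd h h1u
          · exact h
        · rcases heq with ⟨h, -⟩ | ⟨h, h'⟩
          · exact h
          · exact absurd h h1w
    have hBC : B ⊆ C := Finset.filter_subset _ _
    have hex : (C \ B).Nonempty := by
      apply Finset.card_pos.mp
      have := Finset.le_card_sdiff B C
      have h1 : B.card < C.card := by omega
      omega
    obtain ⟨x, hx⟩ := hex
    rw [Finset.mem_sdiff] at hx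
    obtain ⟨hxC, hxB⟩ := hx
    have hxC' := hxC
    rw [hC, Finset.mem_sdiff] at hxC'
    simp only [Finset.mem_insert, Finset.mem_singleton, not_or] at hxC'
    obtain ⟨-, hxu, hxw⟩ := hxC'
    rw [hB, Finset.mem_filter, not_and, not_or] at hxB
    obtain ⟨hf1, hf2⟩ := hxB hxC
    have hadj1 : (G.deleteEdges ↑F).Adj u x := by
      rw [SimpleGraph.deleteEdges_adj]
      exact ⟨hcomp u x (Ne.symm hxu), fun hc => hf1 (Finset.mem_coe.mp hc)⟩
    have hadj2 : (G.deleteEdges ↑F).Adj x w := by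
      rw [SimpleGraph.deleteEdges_adj]
      exact ⟨hcomp x w hxw, fun hc => hf2 (Finset.mem_coe.mp hc)⟩
    exact (hadj1.reachable).trans hadj2.reachable
  · refine SimpleGraph.Adj.reachable ?_
    rw [SimpleGraph.deleteEdges_adj]
    exact ⟨hcomp u w huw, fun hc => he (Finset.mem_coe.mp hc)⟩

lemma edgeConn_complete {V : Type*} [Fintype V] (G : SimpleGraph V)
    (hn : 4 ≤ Fintype.card V) (hcomp : ∀ x y : V, x ≠ y → G.Adj x y) :
    edgeConn G = Fintype.card V - 1 := by
  classical
  have hne : Nonempty V := Fintype.card_pos_iff.mp (by omega)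
  obtain ⟨v₀⟩ := hne
  have hmem := incidence_cut_mem G (by omega) v₀
  have hdeg : (G.incidenceFinset v₀).card = Fintype.card V - 1 := by
    rw [SimpleGraph.card_incidenceFinset_eq_degree, SimpleGraph.degree]
    have : G.neighborFinset v₀ = Finset.univ.erase v₀ := by
      ext x
      rw [SimpleGraph.mem_neighborFinset, Finset.mem_erase]
      exact ⟨fun h => ⟨h.ne', Finset.mem_univ x⟩, fun h => hcomp v₀ x (Ne.symm h.1)⟩
    rw [this, Finset.card_erase_of_mem (Finset.mem_univ v₀), Finset.card_univ]
  refine le_antisymm (hdeg ▸ Nat.sInf_le hmem) ?_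
  apply le_csInf ⟨_, hmem⟩
  rintro m ⟨F, hcard, -, hnc⟩
  by_contra hlt
  push_neg at hlt
  exact hnc (complete_del_connected G hn hcomp F (by omega))


lemma coe_erase_univ {V : Type*} [Fintype V] [DecidableEq V] (v : V) :
    (↑(Finset.univ.erase v) : Set V) = {x | x ≠ v} := by
  ext x; simp

lemma exists_missing {V : Type*} [Fintype V] (S : Finset V)
    (h : S.card = Fintype.card V - 1) (hn : 1 ≤ Fintype.card V) :
    ∃ v, (↑S : Set V) = {x | x ≠ v} := by
  classical
  have hc : Sᶜ.card = 1 := by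
    rw [Finset.card_compl, h]
    omega
  obtain ⟨v, hv⟩ := Finset.card_eq_one.mp hc
  refine ⟨v, ?_⟩
  ext x
  simp only [Finset.coe_mem, Set.mem_setOf_eq, Finset.mem_coe]
  constructor
  · intro hx hxv
    have : x ∈ Sᶜ := by rw [hv]; exact Finset.mem_singleton.mpr hxv
    exact (Finset.mem_compl.mp this) hx
  · intro hx
    by_contra hns
    have : x ∈ Sᶜ := Finset.mem_compl.mpr hns
    rw [hv, Finset.mem_singleton] at this
    exact hx this

/-- μ_{n-1}(G) = ⌊λ(G)/(n-1)⌋. -/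
theorem mu_card_sub_one {V : Type*} [Fintype V] (G : SimpleGraph V)
    (hn : 4 ≤ Fintype.card V) :
    mu G (Fintype.card V - 1) = edgeConn G / (Fintype.card V - 1) := by
  classical
  have hne : Nonempty V := Fintype.card_pos_iff.mp (by omega)
  obtain ⟨v₀⟩ := hne
  by_cases hcomp : ∀ x y : V, x ≠ y → G.Adj x y
  · rw [edgeConn_complete G hn hcomp, Nat.div_self (by omega)]
    have hwit : 1 ∈ {n | ∃ S : Finset V, S.card = Fintype.card V - 1 ∧ muLocal G ↑S = n} := by
      refine ⟨Finset.univ.erase v₀, ?_, ?_⟩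
      · rw [Finset.card_erase_of_mem (Finset.mem_univ v₀), Finset.card_univ]
      · rw [coe_erase_univ]
        exact muLocal_eq_one G hn v₀ (fun s hs => hcomp v₀ s (Ne.symm hs))
    refine le_antisymm (Nat.sInf_le hwit) ?_
    apply le_csInf ⟨1, hwit⟩
    rintro m ⟨S, hS, rfl⟩
    obtain ⟨v, hv⟩ := exists_missing S hS (by omega)
    rw [hv, muLocal_eq_one G hn v (fun s hs => hcomp v s (Ne.symm hs))]
  · push_neg at hcomp
    obtain ⟨u, v, huv, hnadj⟩ := hcomp
    have h2 := edgeConn_le_sub_two G hn u v huv hnadj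
    rw [Nat.div_eq_of_lt (by omega)]
    have hwit : 0 ∈ {n | ∃ S : Finset V, S.card = Fintype.card V - 1 ∧ muLocal G ↑S = n} := by
      refine ⟨Finset.univ.erase v, ?_, ?_⟩
      · rw [Finset.card_erase_of_mem (Finset.mem_univ v), Finset.card_univ]
      · rw [coe_erase_univ]
        exact muLocal_eq_zero G hn u v huv hnadj
    exact Nat.le_zero.mp (Nat.sInf_le hwit)
end

section
/- For the complete bipartite graph K_{a,b} with 2 ≤ a ≤ b, the pendant-tree 3-connectivity satisfies τ_3(K_{a,b}) = a − 2. -/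
open SimpleGraph

/-! ### Auxiliary machinery for the proof -/

section Aux
variable {V : Type*}

/-- A vertex on a cycle has two distinct neighbors. -/
lemma cycle_two_nbrs {H : SimpleGraph V} {v : V} {c : H.Walk v v} (hc : c.IsCycle) :
    ∃ x y, x ≠ y ∧ H.Adj v x ∧ H.Adj v y := by
  have hnil : ¬ c.Nil := hc.not_nil
  rw [Walk.not_nil_iff] at hnil
  obtain ⟨x, hx, q, rfl⟩ := hnil
  have hlen : 3 ≤ q.length + 1 := by simpa using hc.three_le_length
  have hqe : q.edges ≠ [] := by
    have := q.length_edges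
    intro h
    rw [h] at this
    simp at this
    omega
  have hnil2 : ¬ (Walk.cons hx q).reverse.Nil := by
    rw [Walk.nil_iff_length_eq]
    simp
  rw [Walk.not_nil_iff] at hnil2
  obtain ⟨y, hy, r, hr⟩ := hnil2
  refine ⟨x, y, ?_, hx, hy⟩
  rintro rfl
  have hrev : ((Walk.cons hx q).reverse).edges = s(v, x) :: r.edges := by
    rw [hr]; simp [Sym2.eq_swap]
  rw [Walk.edges_reverse] at hrev
  have hlast : ((Walk.cons hx q).edges).getLast? = some s(v, x) := by
    rw [← List.head?_reverse, hrev]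
    rfl
  have hedges : (Walk.cons hx q).edges = s(v, x) :: q.edges := rfl
  rw [hedges] at hlast
  have hlast' : s(v, x) ∈ (s(v, x) :: q.edges).getLast? := by rw [Option.mem_def, hlast]
  obtain ⟨h', heq⟩ := List.mem_getLast?_eq_getLast hlast'
  rw [List.getLast_cons hqe] at heq
  have hmem : s(v, x) ∈ q.edges := heq ▸ List.getLast_mem hqe
  have hnd : ((Walk.cons hx q).edges).Nodup := hc.isCircuit.isTrail.edges_nodup
  rw [hedges, List.nodup_cons] at hnd
  exact hnd.1 hmem

/-- A graph in which all but at most two vertices have at most one neighbor is acyclic. -/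
lemma acyclic_of_two_centers {H : SimpleGraph V} (c₁ c₂ : V)
    (h : ∀ w, w ≠ c₁ → w ≠ c₂ → ∀ x y, H.Adj w x → H.Adj w y → x = y) :
    H.IsAcyclic := by
  classical
  intro v c hc
  have hsupp : ∀ w ∈ c.support, w = c₁ ∨ w = c₂ := by
    intro w hw
    by_contra hcon
    push_neg at hcon
    obtain ⟨x, y, hxy, hx2, hy2⟩ := cycle_two_nbrs (hc.rotate hw)
    exact hxy (h w hcon.1 hcon.2 x y hx2 hy2)
  have h3 : 3 ≤ c.support.tail.length := by
    have h1 := hc.three_le_length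
    have h2 := c.length_support
    have h4 : c.support.tail.length = c.support.length - 1 := by
      simp [List.length_tail]
    omega
  have hnd : c.support.tail.Nodup := ((Walk.isCycle_def _).mp hc).2.2
  have hsub : c.support.tail.toFinset ⊆ ({c₁, c₂} : Finset V) := by
    intro w hw
    simp only [List.mem_toFinset] at hw
    have := hsupp w (List.mem_of_mem_tail hw)
    simpa using this
  have hcard := Finset.card_le_card hsub
  rw [List.toFinset_card_of_nodup hnd] at hcard
  have : ({c₁, c₂} : Finset V).card ≤ 2 :=
    (Finset.card_insert_le _ _).trans (by simp)
  omega

/-- In a connected graph, if `p` and `q` only have each other as neighbors,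
then there are no other vertices. -/
lemma mem_pair_of_connected {H : SimpleGraph V} (hconn : H.Connected) {p q : V}
    (hp : ∀ x, H.Adj p x → x = q) (hq : ∀ x, H.Adj q x → x = p) (r : V) : r = p ∨ r = q := by
  have key : ∀ (s t : V) (w : H.Walk s t), (s = p ∨ s = q) → (t = p ∨ t = q) := by
    intro s t w
    induction w with
    | nil => exact id
    | @cons s u t hadj w ih =>
      intro hs
      apply ih
      rcases hs with rfl | rfl
      · exact Or.inr (hp _ hadj)
      · exact Or.inl (hq _ hadj)
  obtain ⟨w⟩ := hconn p r
  exact key p r w (Or.inl rfl)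

lemma subgraph_finite [Finite V] (G : SimpleGraph V) : Finite G.Subgraph := by
  apply Finite.of_injective (fun H : G.Subgraph => (H.verts, H.Adj))
  intro H H' hh
  simp only [Prod.mk.injEq] at hh
  exact Subgraph.ext hh.1 hh.2

lemma finset_card_le_nat_card {α : Type*} [Finite α] (F : Finset α) : F.card ≤ Nat.card α := by
  letI := Fintype.ofFinite α
  simpa [Nat.card_eq_fintype_card] using Finset.card_le_univ F

end Aux


section Constructions
variable {V : Type*}

/-- Star subgraph: center `c` joined to each element of `S`. -/
def starSG (G : SimpleGraph V) (c : V) (S : Set V) (hc : c ∉ S)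
    (hadj : ∀ s ∈ S, G.Adj c s) : G.Subgraph where
  verts := insert c S
  Adj v w := (v = c ∧ w ∈ S) ∨ (w = c ∧ v ∈ S)
  adj_sub := by
    rintro v w (⟨rfl, hw⟩ | ⟨rfl, hv⟩)
    · exact hadj _ hw
    · exact (hadj _ hv).symm
  edge_vert := by
    rintro v w (⟨rfl, _⟩ | ⟨_, hv⟩)
    · exact Set.mem_insert _ _
    · exact Set.mem_insert_of_mem _ hv
  symm := ⟨by rintro v w h; tauto⟩

variable {G : SimpleGraph V} {c : V} {S : Set V} {hc : c ∉ S} {hadj : ∀ s ∈ S, G.Adj c s}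

@[simp] lemma starSG_verts : (starSG G c S hc hadj).verts = insert c S := rfl
@[simp] lemma starSG_adj {v w : V} :
    (starSG G c S hc hadj).Adj v w ↔ (v = c ∧ w ∈ S) ∨ (w = c ∧ v ∈ S) := Iff.rfl

lemma starSG_isPendant (hS : S.Nonempty) : IsPendantSTree G S (starSG G c S hc hadj) := by
  refine ⟨Set.subset_insert _ _, ⟨?_, ?_⟩, ?_⟩
  · rw [connected_iff_exists_forall_reachable]
    refine ⟨⟨c, Set.mem_insert _ _⟩, ?_⟩
    rintro ⟨u, hu⟩
    rcases hu with rfl | hu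
    · exact Reachable.refl _
    · exact Adj.reachable (by exact Or.inl ⟨rfl, hu⟩)
  · apply acyclic_of_two_centers (⟨c, Set.mem_insert _ _⟩ : (starSG G c S hc hadj).verts)
      ⟨c, Set.mem_insert _ _⟩
    rintro ⟨w, hw⟩ hw1 _ ⟨x, hxv⟩ ⟨y, hyv⟩ hx hy
    have hwc : w ≠ c := fun h => hw1 (Subtype.ext h)
    have hx' : (starSG G c S hc hadj).Adj w x := hx
    have hy' : (starSG G c S hc hadj).Adj w y := hy
    rcases hx' with ⟨h1, _⟩ | ⟨rfl, _⟩
    · exact absurd h1 hwc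
    · rcases hy' with ⟨h1, _⟩ | ⟨h2, _⟩
      · exact absurd h1 hwc
      · exact Subtype.ext h2.symm
  · intro v hv
    have hvc : v ≠ c := fun h => hc (h ▸ hv)
    have hns : (starSG G c S hc hadj).neighborSet v = {c} := by
      ext w
      simp only [Subgraph.mem_neighborSet, starSG_adj, Set.mem_singleton_iff]
      constructor
      · rintro (⟨rfl, _⟩ | ⟨rfl, _⟩)
        · exact absurd rfl hvc
        · rfl
      · rintro rfl
        exact Or.inr ⟨rfl, hv⟩
    rw [hns, Set.ncard_singleton]

lemma star_family (G : SimpleGraph V) (S : Set V) (hS : S.Nonempty) (n : ℕ) (cf : Fin n → V)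
    (hinj : Function.Injective cf) (hcS : ∀ i, cf i ∉ S)
    (hadj : ∀ i, ∀ s ∈ S, G.Adj (cf i) s) :
    ∃ F : Finset G.Subgraph, F.card = n ∧ IsIntDisjointFamily G S F := by
  classical
  set T : Fin n → G.Subgraph := fun i => starSG G (cf i) S (hcS i) (hadj i) with hT
  have hTv : ∀ i, (T i).verts = insert (cf i) S := fun i => rfl
  have hTinj : Function.Injective T := by
    intro i j hij
    have hv : insert (cf i) S = insert (cf j) S := by
      rw [← hTv i, ← hTv j, hij]
    have : cf j ∈ insert (cf i) S := hv ▸ Set.mem_insert _ _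
    rcases this with h | h
    · exact (hinj h).symm
    · exact absurd h (hcS j)
  refine ⟨Finset.univ.image T, ?_, ?_, ?_⟩
  · rw [Finset.card_image_of_injective _ hTinj, Finset.card_univ, Fintype.card_fin]
  · intro A hA
    simp only [Finset.mem_image] at hA
    obtain ⟨i, _, rfl⟩ := hA
    exact starSG_isPendant hS
  · intro A hA B hB hAB
    simp only [Finset.mem_image] at hA hB
    obtain ⟨i, _, rfl⟩ := hA
    obtain ⟨j, _, rfl⟩ := hB
    have hij : i ≠ j := fun h => hAB (by rw [h])
    have hcij : cf i ≠ cf j := fun h => hij (hinj h)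
    constructor
    · apply Set.eq_empty_iff_forall_notMem.mpr
      intro e he
      induction e with
      | _ u v =>
        obtain ⟨he1, he2⟩ := he
        rw [Subgraph.mem_edgeSet] at he1 he2
        rcases he1 with ⟨rfl, h1⟩ | ⟨rfl, h1⟩ <;>
          rcases he2 with ⟨h2, h3⟩ | ⟨h2, h3⟩
        · exact hcij h2
        · exact hcS j (h2 ▸ h1)
        · exact hcS j (h2 ▸ h1)
        · exact hcij h2
    · ext v
      simp only [Set.mem_inter_iff, hTv, Set.mem_insert_iff]
      constructor
      · rintro ⟨rfl | h1, h2 | h2⟩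
        · exact absurd h2 hcij
        · exact h2
        · exact h1
        · exact h1
      · intro hv
        exact ⟨Or.inr hv, Or.inr hv⟩


end Constructions

section Constructions2
variable {V : Type*}

/-- Double star: `c₁ - c₂` edge, `z` attached to `c₁`, each element of `W` attached to `c₂`. -/
def dstarSG (G : SimpleGraph V) (c₁ c₂ z : V) (W : Set V)
    (h12 : G.Adj c₁ c₂) (h1z : G.Adj c₁ z) (h2w : ∀ w ∈ W, G.Adj c₂ w) : G.Subgraph where
  verts := insert c₁ (insert c₂ (insert z W))
  Adj v w := (v = c₁ ∧ w = c₂) ∨ (v = c₂ ∧ w = c₁) ∨ (v = c₁ ∧ w = z) ∨ (v = z ∧ w = c₁) ∨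
    (v = c₂ ∧ w ∈ W) ∨ (w = c₂ ∧ v ∈ W)
  adj_sub := by
    rintro v w (⟨rfl, rfl⟩ | ⟨rfl, rfl⟩ | ⟨rfl, rfl⟩ | ⟨rfl, rfl⟩ | ⟨rfl, hw⟩ | ⟨rfl, hv⟩)
    · exact h12
    · exact h12.symm
    · exact h1z
    · exact h1z.symm
    · exact h2w _ hw
    · exact (h2w _ hv).symm
  edge_vert := by
    rintro v w (⟨rfl, _⟩ | ⟨rfl, _⟩ | ⟨rfl, _⟩ | ⟨rfl, _⟩ | ⟨rfl, _⟩ | ⟨_, hv⟩) <;>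
      simp [*]
  symm := ⟨by rintro v w h; tauto⟩

variable {G : SimpleGraph V} {c₁ c₂ z : V} {W : Set V}
  {h12 : G.Adj c₁ c₂} {h1z : G.Adj c₁ z} {h2w : ∀ w ∈ W, G.Adj c₂ w}

@[simp] lemma dstarSG_verts :
    (dstarSG G c₁ c₂ z W h12 h1z h2w).verts = insert c₁ (insert c₂ (insert z W)) := rfl
@[simp] lemma dstarSG_adj {v w : V} :
    (dstarSG G c₁ c₂ z W h12 h1z h2w).Adj v w ↔
      (v = c₁ ∧ w = c₂) ∨ (v = c₂ ∧ w = c₁) ∨ (v = c₁ ∧ w = z) ∨ (v = z ∧ w = c₁) ∨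
      (v = c₂ ∧ w ∈ W) ∨ (w = c₂ ∧ v ∈ W) := Iff.rfl

lemma dstarSG_isPendant (h1W : c₁ ∉ W) (h2z : c₂ ≠ z) (hzW : z ∉ W) :
    IsPendantSTree G (insert z W) (dstarSG G c₁ c₂ z W h12 h1z h2w) := by
  have h1 : c₁ ≠ c₂ := h12.ne
  have h1z' : c₁ ≠ z := h1z.ne
  have h2W : ∀ w ∈ W, c₂ ≠ w := fun w hw => (h2w w hw).ne
  refine ⟨?_, ⟨?_, ?_⟩, ?_⟩
  · intro v hv
    exact Set.mem_insert_of_mem _ (Set.mem_insert_of_mem _ hv)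
  · rw [connected_iff_exists_forall_reachable]
    refine ⟨⟨c₁, Set.mem_insert _ _⟩, ?_⟩
    rintro ⟨u, hu⟩
    rcases hu with rfl | rfl | rfl | hu
    · exact Reachable.refl _
    · exact Adj.reachable (by exact Or.inl ⟨rfl, rfl⟩)
    · exact Adj.reachable (by exact Or.inr (Or.inr (Or.inl ⟨rfl, rfl⟩)))
    · have h21 : (dstarSG G c₁ c₂ z W h12 h1z h2w).coe.Adj ⟨c₁, Set.mem_insert _ _⟩
          ⟨c₂, Set.mem_insert_of_mem _ (Set.mem_insert _ _)⟩ := Or.inl ⟨rfl, rfl⟩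
      have h2u : (dstarSG G c₁ c₂ z W h12 h1z h2w).coe.Adj
          ⟨c₂, Set.mem_insert_of_mem _ (Set.mem_insert _ _)⟩
          ⟨u, Set.mem_insert_of_mem _ (Set.mem_insert_of_mem _ (Set.mem_insert_of_mem _ hu))⟩ :=
        Or.inr (Or.inr (Or.inr (Or.inr (Or.inl ⟨rfl, hu⟩))))
      exact h21.reachable.trans h2u.reachable
  · apply acyclic_of_two_centers (⟨c₁, Set.mem_insert _ _⟩ :
      (dstarSG G c₁ c₂ z W h12 h1z h2w).verts)
      ⟨c₂, Set.mem_insert_of_mem _ (Set.mem_insert _ _)⟩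
    rintro ⟨w, hw⟩ hw1 hw2 ⟨x, hxv⟩ ⟨y, hyv⟩ hx hy
    have hwc1 : w ≠ c₁ := fun h => hw1 (Subtype.ext h)
    have hwc2 : w ≠ c₂ := fun h => hw2 (Subtype.ext h)
    have hx' : (dstarSG G c₁ c₂ z W h12 h1z h2w).Adj w x := hx
    have hy' : (dstarSG G c₁ c₂ z W h12 h1z h2w).Adj w y := hy
    apply Subtype.ext
    rcases hx' with ⟨h', _⟩ | ⟨h', _⟩ | ⟨h', _⟩ | ⟨hwz, rfl⟩ | ⟨h', _⟩ | ⟨rfl, hmem⟩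
    · exact absurd h' hwc1
    · exact absurd h' hwc2
    · exact absurd h' hwc1
    · rcases hy' with ⟨h', _⟩ | ⟨h', _⟩ | ⟨h', _⟩ | ⟨_, rfl⟩ | ⟨h', _⟩ | ⟨rfl, hmem⟩
      · exact absurd h' hwc1
      · exact absurd h' hwc2
      · exact absurd h' hwc1
      · rfl
      · exact absurd h' hwc2
      · exact absurd (hwz ▸ hmem) hzW
    · exact absurd h' hwc2
    · rcases hy' with ⟨h', _⟩ | ⟨h', _⟩ | ⟨h', _⟩ | ⟨hwz, rfl⟩ | ⟨h', _⟩ | ⟨rfl, _⟩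
      · exact absurd h' hwc1
      · exact absurd h' hwc2
      · exact absurd h' hwc1
      · exact absurd (hwz ▸ hmem) hzW
      · exact absurd h' hwc2
      · rfl
  · intro v hv
    rcases hv with hv | hv
    · have hns : (dstarSG G c₁ c₂ z W h12 h1z h2w).neighborSet v = {c₁} := by
        ext u
        simp only [Subgraph.mem_neighborSet, dstarSG_adj, Set.mem_singleton_iff]
        constructor
        · rintro (⟨h', _⟩ | ⟨h', _⟩ | ⟨h', _⟩ | ⟨_, rfl⟩ | ⟨h', _⟩ | ⟨_, hmem⟩)
          · exact absurd (hv.symm.trans h').symm h1z'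
          · exact absurd (hv.symm.trans h').symm h2z
          · exact absurd (hv.symm.trans h').symm h1z'
          · rfl
          · exact absurd (hv.symm.trans h').symm h2z
          · exact absurd (hv ▸ hmem) hzW
        · rintro rfl
          exact Or.inr (Or.inr (Or.inr (Or.inl ⟨hv, rfl⟩)))
      rw [hns, Set.ncard_singleton]
    · have hvc1 : v ≠ c₁ := fun h => h1W (h ▸ hv)
      have hvc2 : v ≠ c₂ := fun h => (h2W v hv) h.symm
      have hvz : v ≠ z := fun h => hzW (h ▸ hv)
      have hns : (dstarSG G c₁ c₂ z W h12 h1z h2w).neighborSet v = {c₂} := by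
        ext u
        simp only [Subgraph.mem_neighborSet, dstarSG_adj, Set.mem_singleton_iff]
        constructor
        · rintro (⟨h', _⟩ | ⟨h', _⟩ | ⟨h', _⟩ | ⟨h', _⟩ | ⟨h', _⟩ | ⟨rfl, hmem⟩)
          · exact absurd h' hvc1
          · exact absurd h' hvc2
          · exact absurd h' hvc1
          · exact absurd h' hvz
          · exact absurd h' hvc2
          · rfl
        · rintro rfl
          exact Or.inr (Or.inr (Or.inr (Or.inr (Or.inr ⟨rfl, hv⟩))))
      rw [hns, Set.ncard_singleton]

lemma dstar_family (G : SimpleGraph V) (z : V) (W : Set V) (hzW : z ∉ W)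
    (n : ℕ) (f g : Fin n → V) (hf : Function.Injective f) (hg : Function.Injective g)
    (hfg : ∀ i j, f i ≠ g j)
    (hfS : ∀ i, f i ∉ insert z W) (hgS : ∀ i, g i ∉ insert z W)
    (hadj1 : ∀ i, G.Adj (f i) (g i)) (hadjz : ∀ i, G.Adj (f i) z)
    (hadjW : ∀ i, ∀ w ∈ W, G.Adj (g i) w) :
    ∃ F : Finset G.Subgraph, F.card = n ∧ IsIntDisjointFamily G (insert z W) F := by
  classical
  have hfz : ∀ i, f i ≠ z := fun i h => hfS i (h ▸ Set.mem_insert _ _)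
  have hfW : ∀ i, f i ∉ W := fun i h => hfS i (Set.mem_insert_of_mem _ h)
  have hgz : ∀ i, g i ≠ z := fun i h => hgS i (h ▸ Set.mem_insert _ _)
  have hgW : ∀ i, g i ∉ W := fun i h => hgS i (Set.mem_insert_of_mem _ h)
  set T : Fin n → G.Subgraph := fun i =>
    dstarSG G (f i) (g i) z W (hadj1 i) (hadjz i) (hadjW i) with hT
  have hTv : ∀ i, (T i).verts = insert (f i) (insert (g i) (insert z W)) := fun i => rfl
  have hmemv : ∀ i v, v ∈ (T i).verts ↔ (v = f i ∨ v = g i ∨ v = z ∨ v ∈ W) := by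
    intro i v
    rw [hTv i]
    simp [Set.mem_insert_iff]
  have hTinj : Function.Injective T := by
    intro i j hij
    have : f i ∈ (T j).verts := by
      rw [← hij, hmemv]
      exact Or.inl rfl
    rw [hmemv] at this
    rcases this with h | h | h | h
    · exact hf h
    · exact absurd h (hfg i j)
    · exact absurd h (hfz i)
    · exact absurd h (hfW i)
  have hcentv : ∀ i j, i ≠ j → (f i ∉ (T j).verts ∧ g i ∉ (T j).verts) := by
    intro i j hij
    constructor
    · rw [hmemv]
      rintro (h | h | h | h)
      · exact hij (hf h)
      · exact hfg i j h
      · exact hfz i h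
      · exact hfW i h
    · rw [hmemv]
      rintro (h | h | h | h)
      · exact (hfg j i) h.symm
      · exact hij (hg h)
      · exact hgz i h
      · exact hgW i h
  refine ⟨Finset.univ.image T, ?_, ?_, ?_⟩
  · rw [Finset.card_image_of_injective _ hTinj, Finset.card_univ, Fintype.card_fin]
  · intro A hA
    simp only [Finset.mem_image] at hA
    obtain ⟨i, _, rfl⟩ := hA
    exact dstarSG_isPendant (hfW i) (fun h => hgz i h) hzW
  · intro A hA B hB hAB
    simp only [Finset.mem_image] at hA hB
    obtain ⟨i, _, rfl⟩ := hA
    obtain ⟨j, _, rfl⟩ := hB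
    have hij : i ≠ j := fun h => hAB (by rw [h])
    constructor
    · apply Set.eq_empty_iff_forall_notMem.mpr
      intro e he
      induction e with
      | _ u v =>
        obtain ⟨he1, he2⟩ := he
        rw [Subgraph.mem_edgeSet] at he1 he2
        -- every edge of `T i` has an endpoint among the centers of `i`
        have hcent : u = f i ∨ u = g i ∨ v = f i ∨ v = g i := by
          rcases he1 with ⟨h', _⟩ | ⟨h', _⟩ | ⟨h', _⟩ | ⟨_, h'⟩ | ⟨h', _⟩ | ⟨h', _⟩ <;> tauto
        have hu : u ∈ (T j).verts := (T j).edge_vert he2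
        have hv : v ∈ (T j).verts := (T j).edge_vert he2.symm
        obtain ⟨hfj, hgj⟩ := hcentv i j hij
        rcases hcent with rfl | rfl | rfl | rfl
        · exact hfj hu
        · exact hgj hu
        · exact hfj hv
        · exact hgj hv
    · ext v
      simp only [Set.mem_inter_iff, hmemv, Set.mem_insert_iff]
      obtain ⟨hfj, hgj⟩ := hcentv i j hij
      obtain ⟨hfi, hgi⟩ := hcentv j i (Ne.symm hij)
      constructor
      · rintro ⟨h1 | h1 | h1 | h1, h2 | h2 | h2 | h2⟩ <;>
          first
            | (left; assumption)
            | (right; assumption)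
            | (exfalso; subst h1; rw [hmemv] at hfj hgj hfi hgi; tauto)
      · rintro (rfl | hv)
        · exact ⟨Or.inr (Or.inr (Or.inl rfl)), Or.inr (Or.inr (Or.inl rfl))⟩
        · exact ⟨Or.inr (Or.inr (Or.inr hv)), Or.inr (Or.inr (Or.inr hv))⟩


end Constructions2

section TauLocal
variable {V : Type*}

lemma isIntDisjointFamily_empty (G : SimpleGraph V) (S : Set V) :
    IsIntDisjointFamily G S (∅ : Finset G.Subgraph) :=
  ⟨fun T h => absurd h (Finset.notMem_empty T), fun T h => absurd h (Finset.notMem_empty T)⟩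

lemma tauLocal_ge [Finite V] (G : SimpleGraph V) (S : Set V) (m : ℕ)
    (hlow : ∃ F : Finset G.Subgraph, F.card = m ∧ IsIntDisjointFamily G S F) :
    m ≤ tauLocal G S := by
  have : Finite G.Subgraph := subgraph_finite G
  obtain ⟨F, hcard, hF⟩ := hlow
  exact le_csSup ⟨Nat.card G.Subgraph, by
    rintro n ⟨F', rfl, -⟩; exact finset_card_le_nat_card F'⟩ ⟨F, hcard, hF⟩

lemma tauLocal_eq (G : SimpleGraph V) (S : Set V) (m : ℕ)
    (hup : ∀ F : Finset G.Subgraph, IsIntDisjointFamily G S F → F.card ≤ m)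
    (hlow : ∃ F : Finset G.Subgraph, F.card = m ∧ IsIntDisjointFamily G S F) :
    tauLocal G S = m := by
  apply le_antisymm
  · have hne : {n | ∃ F : Finset G.Subgraph, F.card = n ∧ IsIntDisjointFamily G S F}.Nonempty :=
      ⟨0, ∅, Finset.card_empty, isIntDisjointFamily_empty G S⟩
    apply csSup_le hne
    rintro n ⟨F, rfl, hF⟩
    exact hup F hF
  · obtain ⟨F, hcard, hF⟩ := hlow
    exact le_csSup ⟨m, by rintro n ⟨F', rfl, hF'⟩; exact hup F' hF'⟩ ⟨F, hcard, hF⟩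

end TauLocal

section Bip
variable {a b : ℕ}

local notation "V'" => (Fin a ⊕ Fin b)
local notation "G'" => completeBipartiteGraph (Fin a) (Fin b)

lemma low_llr (hab : a ≤ b) (p r : Fin a) (q : Fin b) (hpr : p ≠ r) :
    ∃ F : Finset (completeBipartiteGraph (Fin a) (Fin b)).Subgraph, F.card = a - 2 ∧
      IsIntDisjointFamily G' (insert (Sum.inr q) {Sum.inl p, Sum.inl r}) F := by
  classical
  have hcardA : a - 2 ≤ (Finset.univ \ {p, r} : Finset (Fin a)).card := by
    rw [Finset.card_sdiff_of_subset (Finset.subset_univ _), Finset.card_univ, Fintype.card_fin,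
      Finset.card_pair hpr]
  have hcardB : a - 2 ≤ (Finset.univ \ {q} : Finset (Fin b)).card := by
    rw [Finset.card_sdiff_of_subset (Finset.subset_univ _), Finset.card_univ, Fintype.card_fin,
      Finset.card_singleton]
    omega
  set eA := Finset.orderEmbOfCardLe (Finset.univ \ {p, r}) hcardA with heAdef
  set eB := Finset.orderEmbOfCardLe (Finset.univ \ {q}) hcardB with heBdef
  have heA : ∀ i, eA i ≠ p ∧ eA i ≠ r := by
    intro i
    have := Finset.orderEmbOfCardLe_mem _ hcardA i
    simp only [Finset.mem_sdiff, Finset.mem_univ, Finset.mem_insert,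
      Finset.mem_singleton, true_and] at this
    tauto
  have heB : ∀ i, eB i ≠ q := by
    intro i
    have := Finset.orderEmbOfCardLe_mem _ hcardB i
    simpa using this
  apply dstar_family G' (Sum.inr q) ({Sum.inl p, Sum.inl r} : Set V')
    (by simp) (a - 2) (fun i => Sum.inl (eA i)) (fun i => Sum.inr (eB i))
  · intro i j h
    exact eA.injective (Sum.inl_injective h)
  · intro i j h
    exact eB.injective (Sum.inr_injective h)
  · intro i j
    simp
  · intro i
    simp only [Set.mem_insert_iff, Set.mem_singleton_iff]
    push_neg
    refine ⟨by simp, ?_, ?_⟩ <;> simp [(heA i).1, (heA i).2]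
  · intro i
    simp only [Set.mem_insert_iff, Set.mem_singleton_iff]
    push_neg
    refine ⟨by simp [heB i], by simp, by simp⟩
  · intro i; simp
  · intro i; simp
  · intro i w hw
    rcases hw with rfl | hw
    · simp
    · rw [Set.mem_singleton_iff] at hw
      subst hw
      simp

lemma low_lrr (ha : 2 ≤ a) (hab : a ≤ b) (p : Fin a) (q s : Fin b) (hqs : q ≠ s) :
    ∃ F : Finset (completeBipartiteGraph (Fin a) (Fin b)).Subgraph, F.card = a - 2 ∧
      IsIntDisjointFamily G' (insert (Sum.inl p) {Sum.inr q, Sum.inr s}) F := by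
  classical
  have hcardB : a - 2 ≤ (Finset.univ \ {q, s} : Finset (Fin b)).card := by
    rw [Finset.card_sdiff_of_subset (Finset.subset_univ _), Finset.card_univ, Fintype.card_fin,
      Finset.card_pair hqs]
    omega
  have hcardA : a - 2 ≤ (Finset.univ \ {p} : Finset (Fin a)).card := by
    rw [Finset.card_sdiff_of_subset (Finset.subset_univ _), Finset.card_univ, Fintype.card_fin,
      Finset.card_singleton]
    omega
  set eB := Finset.orderEmbOfCardLe (Finset.univ \ {q, s}) hcardB with heBdef
  set eA := Finset.orderEmbOfCardLe (Finset.univ \ {p}) hcardA with heAdef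
  have heB : ∀ i, eB i ≠ q ∧ eB i ≠ s := by
    intro i
    have := Finset.orderEmbOfCardLe_mem _ hcardB i
    simp only [Finset.mem_sdiff, Finset.mem_univ, Finset.mem_insert,
      Finset.mem_singleton, true_and] at this
    tauto
  have heA : ∀ i, eA i ≠ p := by
    intro i
    have := Finset.orderEmbOfCardLe_mem _ hcardA i
    simpa using this
  apply dstar_family G' (Sum.inl p) ({Sum.inr q, Sum.inr s} : Set V')
    (by simp) (a - 2) (fun i => Sum.inr (eB i)) (fun i => Sum.inl (eA i))
  · intro i j h
    exact eB.injective (Sum.inr_injective h)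
  · intro i j h
    exact eA.injective (Sum.inl_injective h)
  · intro i j
    simp
  · intro i
    simp only [Set.mem_insert_iff, Set.mem_singleton_iff]
    push_neg
    refine ⟨by simp, by simp [(heB i).1], by simp [(heB i).2]⟩
  · intro i
    simp only [Set.mem_insert_iff, Set.mem_singleton_iff]
    push_neg
    refine ⟨by simp [heA i], by simp, by simp⟩
  · intro i; simp
  · intro i; simp
  · intro i w hw
    rcases hw with rfl | hw
    · simp
    · rw [Set.mem_singleton_iff] at hw
      subst hw
      simp

lemma low_lll (hab : a ≤ b) (p q r : Fin a) :
    ∃ F : Finset (completeBipartiteGraph (Fin a) (Fin b)).Subgraph, F.card = a - 2 ∧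
      IsIntDisjointFamily G' ({Sum.inl p, Sum.inl q, Sum.inl r} : Set V') F := by
  apply star_family G' _ ⟨Sum.inl p, Set.mem_insert _ _⟩ (a - 2)
    (fun i => Sum.inr (⟨i.1, by omega⟩ : Fin b))
  · intro i j h
    have := Sum.inr_injective h
    exact Fin.ext (by simpa [Fin.ext_iff] using this)
  · intro i
    simp
  · intro i s hs
    rcases hs with rfl | rfl | rfl <;> simp

lemma low_rrr (ha : 2 ≤ a) (p q r : Fin b) :
    ∃ F : Finset (completeBipartiteGraph (Fin a) (Fin b)).Subgraph, F.card = a - 2 ∧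
      IsIntDisjointFamily G' ({Sum.inr p, Sum.inr q, Sum.inr r} : Set V') F := by
  apply star_family G' _ ⟨Sum.inr p, Set.mem_insert _ _⟩ (a - 2)
    (fun i => Sum.inl (⟨i.1, by omega⟩ : Fin a))
  · intro i j h
    have := Sum.inl_injective h
    exact Fin.ext (by simpa [Fin.ext_iff] using this)
  · intro i
    simp
  · intro i s hs
    rcases hs with rfl | rfl | rfl <;> simp

lemma exists_family (ha : 2 ≤ a) (hab : a ≤ b) (S : Finset V') (hS : S.card = 3) :
    ∃ F : Finset (completeBipartiteGraph (Fin a) (Fin b)).Subgraph, F.card = a - 2 ∧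
      IsIntDisjointFamily G' ↑S F := by
  obtain ⟨x, y, z, hxy, hxz, hyz, rfl⟩ := Finset.card_eq_three.mp hS
  have hcoe : (↑({x, y, z} : Finset V') : Set V') = {x, y, z} := by simp
  rw [hcoe]
  have hrw : ∀ s t : Set V', s = t →
      (∃ F : Finset (completeBipartiteGraph (Fin a) (Fin b)).Subgraph,
        F.card = a - 2 ∧ IsIntDisjointFamily G' t F) →
      (∃ F : Finset (completeBipartiteGraph (Fin a) (Fin b)).Subgraph,
        F.card = a - 2 ∧ IsIntDisjointFamily G' s F) := by
    rintro s t rfl h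
    exact h
  rcases x with p | p <;> rcases y with q | q <;> rcases z with r | r
  · exact low_lll hab p q r
  · exact hrw _ _ (by ext v; simp; try tauto)
      (low_llr hab p q r (by simpa using hxy))
  · exact hrw _ _ (by ext v; simp; try tauto)
      (low_llr hab p r q (by simpa using hxz))
  · exact hrw _ _ (by ext v; simp; try tauto)
      (low_lrr ha hab p q r (by simpa using hyz))
  · exact hrw _ _ (by ext v; simp; try tauto)
      (low_llr hab q r p (by simpa using hyz))
  · exact hrw _ _ (by ext v; simp; try tauto)
      (low_lrr ha hab q p r (by simpa using hxz))
  · exact hrw _ _ (by ext v; simp; try tauto)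
      (low_lrr ha hab r p q (by simpa using hxy))
  · exact low_rrr ha p q r

end Bip

section Upper
variable {a b : ℕ}

lemma upper_bound (ha : 2 ≤ a) (hab : a ≤ b)
    (F : Finset (completeBipartiteGraph (Fin a) (Fin b)).Subgraph)
    (hF : IsIntDisjointFamily (completeBipartiteGraph (Fin a) (Fin b))
      ↑({Sum.inl ⟨0, by omega⟩, Sum.inl ⟨1, by omega⟩,
          Sum.inr ⟨0, by omega⟩} : Finset (Fin a ⊕ Fin b)) F) :
    F.card ≤ a - 2 := by
  classical
  set x0 : Fin a := ⟨0, by omega⟩ with hx0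
  set x1 : Fin a := ⟨1, by omega⟩ with hx1
  set z0 : Fin b := ⟨0, by omega⟩ with hz0
  set S₀ : Finset (Fin a ⊕ Fin b) := {Sum.inl x0, Sum.inl x1, Sum.inr z0} with hS₀
  have hx01 : x0 ≠ x1 := by simp [hx0, hx1, Fin.ext_iff]
  have hSmem : ∀ v : Fin a ⊕ Fin b, v ∈ (↑S₀ : Set (Fin a ⊕ Fin b)) ↔
      (v = Sum.inl x0 ∨ v = Sum.inl x1 ∨ v = Sum.inr z0) := by
    intro v
    simp [hS₀]
  have key : ∀ T ∈ F, ∀ w w' : Fin a, w ≠ w' →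
      Sum.inl w ∈ (↑S₀ : Set (Fin a ⊕ Fin b)) → Sum.inl w' ∈ (↑S₀ : Set (Fin a ⊕ Fin b)) →
      T.Adj (Sum.inr z0) (Sum.inl w) → False := by
    intro T hT w w' hne hwS hw'S hadjw
    obtain ⟨hsub, htree, hdeg⟩ := hF.1 T hT
    have hz0S : Sum.inr z0 ∈ (↑S₀ : Set (Fin a ⊕ Fin b)) := by
      rw [hSmem]; tauto
    obtain ⟨n1, hn1⟩ := Set.ncard_eq_one.mp (hdeg _ hz0S)
    obtain ⟨n2, hn2⟩ := Set.ncard_eq_one.mp (hdeg _ hwS)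
    have e1 : n1 = Sum.inl w := by
      have h' : Sum.inl w ∈ T.neighborSet (Sum.inr z0) := hadjw
      rw [hn1, Set.mem_singleton_iff] at h'
      exact h'.symm
    have e2 : n2 = Sum.inr z0 := by
      have h' : Sum.inr z0 ∈ T.neighborSet (Sum.inl w) := hadjw.symm
      rw [hn2, Set.mem_singleton_iff] at h'
      exact h'.symm
    have hzin : Sum.inr z0 ∈ T.verts := hsub hz0S
    have hwin : Sum.inl w ∈ T.verts := hsub hwS
    have hw'in : Sum.inl w' ∈ T.verts := hsub hw'S
    have hp : ∀ t : T.verts, T.coe.Adj ⟨Sum.inr z0, hzin⟩ t → t = ⟨Sum.inl w, hwin⟩ := by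
      rintro ⟨t, ht⟩ hadj'
      have h' : t ∈ T.neighborSet (Sum.inr z0) := hadj'
      rw [hn1, Set.mem_singleton_iff] at h'
      exact Subtype.ext (h'.trans e1)
    have hq : ∀ t : T.verts, T.coe.Adj ⟨Sum.inl w, hwin⟩ t → t = ⟨Sum.inr z0, hzin⟩ := by
      rintro ⟨t, ht⟩ hadj'
      have h' : t ∈ T.neighborSet (Sum.inl w) := hadj'
      rw [hn2, Set.mem_singleton_iff] at h'
      exact Subtype.ext (h'.trans e2)
    have hmem := mem_pair_of_connected htree.isConnected hp hq ⟨Sum.inl w', hw'in⟩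
    rcases hmem with h | h
    · exact absurd (congrArg Subtype.val h) (by simp)
    · have h' := congrArg Subtype.val h
      simp only at h'
      exact hne (Sum.inl_injective h').symm
  have hexists : ∀ T ∈ F, ∃ u : Fin a,
      T.Adj (Sum.inr z0) (Sum.inl u) ∧ u ≠ x0 ∧ u ≠ x1 := by
    intro T hT
    obtain ⟨hsub, htree, hdeg⟩ := hF.1 T hT
    have hz0S : Sum.inr z0 ∈ (↑S₀ : Set (Fin a ⊕ Fin b)) := by
      rw [hSmem]; tauto
    obtain ⟨n1, hn1⟩ := Set.ncard_eq_one.mp (hdeg _ hz0S)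
    have hadj : T.Adj (Sum.inr z0) n1 := by
      have h' : n1 ∈ T.neighborSet (Sum.inr z0) := by rw [hn1]; rfl
      exact h'
    have hGadj := T.adj_sub hadj
    rcases n1 with u | u
    · refine ⟨u, hadj, ?_, ?_⟩
      · intro h
        exact key T hT x0 x1 hx01 (by rw [hSmem]; tauto) (by rw [hSmem]; tauto) (h ▸ hadj)
      · intro h
        exact key T hT x1 x0 hx01.symm (by rw [hSmem]; tauto) (by rw [hSmem]; tauto) (h ▸ hadj)
    · simp at hGadj
  have hne : Nonempty (Fin a) := ⟨⟨0, by omega⟩⟩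
  choose! φ hφ using hexists
  have hle : F.card ≤ (Finset.univ \ {x0, x1} : Finset (Fin a)).card := by
    apply Finset.card_le_card_of_injOn φ
    · intro T hT
      simp only [Finset.mem_coe, Finset.mem_sdiff, Finset.mem_univ, Finset.mem_insert,
        Finset.mem_singleton, true_and]
      push_neg
      exact (hφ T hT).2
    · intro T hT T' hT' heq
      by_contra hne'
      obtain ⟨-, hverts⟩ := hF.2 T hT T' hT' hne'
      have h1 : Sum.inl (φ T) ∈ T.verts := T.edge_vert (hφ T hT).1.symm
      have h2 : Sum.inl (φ T) ∈ T'.verts := by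
        rw [heq]
        exact T'.edge_vert (hφ T' hT').1.symm
      have hin : Sum.inl (φ T) ∈ (↑S₀ : Set (Fin a ⊕ Fin b)) := hverts ▸ ⟨h1, h2⟩
      rw [hSmem] at hin
      obtain ⟨-, hne0, hne1⟩ := hφ T hT
      rcases hin with h | h | h
      · exact hne0 (Sum.inl_injective h)
      · exact hne1 (Sum.inl_injective h)
      · exact absurd h (by simp)
  have hcard : (Finset.univ \ {x0, x1} : Finset (Fin a)).card = a - 2 := by
    rw [Finset.card_sdiff_of_subset (Finset.subset_univ _), Finset.card_univ, Fintype.card_fin,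
      Finset.card_pair hx01]
  rw [hcard] at hle
  exact hle

theorem tau_three_cb (ha : 2 ≤ a) (hab : a ≤ b) :
    tau (completeBipartiteGraph (Fin a) (Fin b)) 3 = a - 2 := by
  classical
  set G := completeBipartiteGraph (Fin a) (Fin b) with hG
  set S₀ : Finset (Fin a ⊕ Fin b) :=
    {Sum.inl ⟨0, by omega⟩, Sum.inl ⟨1, by omega⟩, Sum.inr ⟨0, by omega⟩} with hS₀
  have hS₀card : S₀.card = 3 := by
    rw [hS₀]
    rw [Finset.card_insert_of_notMem (by simp [Fin.ext_iff]),
      Finset.card_insert_of_notMem (by simp), Finset.card_singleton]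
  have hlow0 : ∃ F : Finset G.Subgraph, F.card = a - 2 ∧
      IsIntDisjointFamily G ↑S₀ F := by
    have h := low_llr (a := a) hab ⟨0, by omega⟩ ⟨1, by omega⟩ ⟨0, by omega⟩
      (by simp [Fin.ext_iff])
    have hset : (↑S₀ : Set (Fin a ⊕ Fin b)) =
        insert (Sum.inr ⟨0, by omega⟩) {Sum.inl ⟨0, by omega⟩, Sum.inl ⟨1, by omega⟩} := by
      ext v
      simp [hS₀]
      tauto
    rw [hset]
    exact h
  have hmem : a - 2 ∈ {n | ∃ S : Finset (Fin a ⊕ Fin b), S.card = 3 ∧ tauLocal G ↑S = n} :=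
    ⟨S₀, hS₀card, tauLocal_eq G ↑S₀ (a - 2) (fun F hF => upper_bound ha hab F hF) hlow0⟩
  have hbound : ∀ n ∈ {n | ∃ S : Finset (Fin a ⊕ Fin b), S.card = 3 ∧ tauLocal G ↑S = n},
      a - 2 ≤ n := by
    rintro n ⟨S, hS3, rfl⟩
    exact tauLocal_ge G ↑S (a - 2) (exists_family ha hab S hS3)
  exact le_antisymm (Nat.sInf_le hmem) (le_csInf ⟨_, hmem⟩ hbound)

end Upper

/-- τ_3(K_{a,b}) = a - 2 for 2 ≤ a ≤ b. -/
theorem tau_three_completeBipartite (a b : ℕ) (ha : 2 ≤ a) (hab : a ≤ b) :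
    tau (completeBipartiteGraph (Fin a) (Fin b)) 3 = a - 2 :=
  tau_three_cb ha hab
end
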